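/- arXiv:math/0307100 — 2 statements merged into one kernel-verified Lean document; each statement's English description precedes it below -/
import Mathlib

section
/- For each i ≥ 1, the group H_i^{Z/2}(Z;Z) is 2-torsion, where Z/2 acts on Z via n ↦ -n. -/
namespace IGC

noncomputable section
set_option linter.unusedSectionVars false

/-- The group of `n`-chains of the bar complex of `G` with coefficients in `A`
(trivial `G`-action): the free `A`-module on `n`-tuples of elements of `G`. -/
abbrev C (G : Type*) [Group G] (A : Type*) [AddCommGroup A] (n : ℕ) : Type _ :=
  (Fin n → G) →₀ A

/-- The `i`-th face of a bar symbol `[g_1|⋯|g_{n+1}]`. -/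
def barFace {G : Type*} [Group G] {n : ℕ} (i : Fin (n + 2)) (g : Fin (n + 1) → G) :
    Fin n → G := fun j =>
  if (j : ℕ) + 1 < (i : ℕ) then g j.castSucc
  else if (j : ℕ) + 1 = (i : ℕ) then g j.castSucc * g j.succ
  else g j.succ

/-- The boundary map of the bar complex. -/
def barD (G : Type*) [Group G] (A : Type*) [AddCommGroup A] (n : ℕ) :
    C G A (n + 1) →+ C G A n :=
  Finsupp.liftAddHom fun g =>
    { toFun := fun a => ∑ i : Fin (n + 2), Finsupp.single (barFace i g) (((-1 : ℤ) ^ (i : ℕ)) • a)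
      map_zero' := by simp
      map_add' := fun a b => by
        simp [smul_add, Finsupp.single_add, Finset.sum_add_distrib] }

lemma barD_single {G : Type*} [Group G] {A : Type*} [AddCommGroup A] (n : ℕ)
    (g : Fin (n + 1) → G) (a : A) :
    barD G A n (Finsupp.single g a) =
      ∑ i : Fin (n + 2), Finsupp.single (barFace i g) (((-1 : ℤ) ^ (i : ℕ)) • a) := by
  rw [barD, Finsupp.liftAddHom_apply_single]; rfl

/-- The boundary map out of degree `n` (the zero map for `n = 0`). -/
def barDFrom (G : Type*) [Group G] (A : Type*) [AddCommGroup A] :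
    (n : ℕ) → C G A n →+ C G A (n - 1)
  | 0 => 0
  | n + 1 => barD G A n

/-- The chain map on bar complexes induced by a group homomorphism. -/
def chainMapOf (G : Type*) [Group G] (A : Type*) [AddCommGroup A] {H : Type*} [Group H]
    (φ : H →* G) (n : ℕ) : C H A n →+ C G A n :=
  Finsupp.mapDomain.addMonoidHom fun g j => φ (g j)

lemma chainMapOf_single (G : Type*) [Group G] (A : Type*) [AddCommGroup A] {H : Type*} [Group H]
    (φ : H →* G) (n : ℕ) (g : Fin n → H) (a : A) :
    chainMapOf G A φ n (Finsupp.single g a) = Finsupp.single (fun j => φ (g j)) a := by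
  rw [chainMapOf, Finsupp.mapDomain.addMonoidHom_apply, Finsupp.mapDomain_single]

lemma barFace_comp {G : Type*} [Group G] {H : Type*} [Group H] (φ : H →* G) {n : ℕ}
    (i : Fin (n + 2)) (g : Fin (n + 1) → H) :
    (barFace i fun j => φ (g j)) = fun j => φ (barFace i g j) := by
  funext j
  unfold barFace
  split_ifs <;> simp

lemma chainMapOf_barD (G : Type*) [Group G] (A : Type*) [AddCommGroup A] {H : Type*} [Group H]
    (φ : H →* G) (n : ℕ) :
    (barD G A n).comp (chainMapOf G A φ (n + 1)) = (chainMapOf G A φ n).comp (barD H A n) := by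
  apply Finsupp.addHom_ext
  intro g a
  rw [AddMonoidHom.comp_apply, AddMonoidHom.comp_apply, chainMapOf_single, barD_single,
    barD_single, map_sum]
  refine Finset.sum_congr rfl fun i _ => ?_
  rw [chainMapOf_single, barFace_comp]

lemma chainMapOf_comp (G : Type*) [Group G] (A : Type*) [AddCommGroup A]
    {H K : Type*} [Group H] [Group K] (ψ : H →* G) (φ : K →* H) (n : ℕ) :
    (chainMapOf G A ψ n).comp (chainMapOf H A φ n) = chainMapOf G A (ψ.comp φ) n := by
  apply Finsupp.addHom_ext
  intro g a
  rw [AddMonoidHom.comp_apply, chainMapOf_single, chainMapOf_single, chainMapOf_single]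
  rfl

section Action

variable (G : Type*) [Group G] (A : Type*) [AddCommGroup A]
variable (Q : Type*) [Group Q] [Fintype Q] [MulDistribMulAction Q G]

/-- The action of `q : Q` on bar chains. -/
def qMap (q : Q) (n : ℕ) : C G A n →+ C G A n :=
  chainMapOf G A (MulDistribMulAction.toMonoidHom G q) n

/-- The subgroup of `Q`-fixed elements of `G`. -/
def fixedSubgroup : Subgroup G where
  carrier := {g | ∀ q : Q, q • g = g}
  one_mem' := fun q => smul_one q
  mul_mem' := fun ha hb q => by rw [smul_mul', ha q, hb q]
  inv_mem' := fun ha q => by rw [smul_inv', ha q]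

/-- The subcomplex of `Q`-invariant bar chains. -/
def invC (n : ℕ) : AddSubgroup (C G A n) :=
  ⨅ q : Q, (qMap G A Q q n - AddMonoidHom.id (C G A n)).ker

/-- Cycles of the bar complex. -/
def cycles (n : ℕ) : AddSubgroup (C G A n) := (barDFrom G A n).ker

/-- Boundaries of the bar complex. -/
def boundaries (n : ℕ) : AddSubgroup (C G A n) := (barD G A n).range

/-- The group homology `H_n(G;A)` (with trivial action on `A`), computed from the bar complex. -/
abbrev barHomology (n : ℕ) : Type _ :=
  cycles G A n ⧸ (boundaries G A n).addSubgroupOf (cycles G A n)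

/-- `Q`-invariant cycles. -/
def invCycles (n : ℕ) : AddSubgroup (C G A n) := invC G A Q n ⊓ cycles G A n

/-- Boundaries of `Q`-invariant chains. -/
def invBoundaries (n : ℕ) : AddSubgroup (C G A n) := (invC G A Q (n + 1)).map (barD G A n)

/-- `H_n^Q(G;A)`: the homology of the subcomplex of `Q`-invariant bar chains. -/
abbrev invHomology (n : ℕ) : Type _ :=
  invCycles G A Q n ⧸ (invBoundaries G A Q n).addSubgroupOf (invCycles G A Q n)

/-- The map `i_* : H_n^Q(G;A) → H_n(G;A)` induced by the inclusion of complexes. -/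
def inclHom (n : ℕ) : invHomology G A Q n →+ barHomology G A n :=
  QuotientAddGroup.map _ _ (AddSubgroup.inclusion inf_le_right) (by
    intro x hx
    rw [AddSubgroup.mem_addSubgroupOf] at hx
    rw [AddSubgroup.mem_comap, AddSubgroup.mem_addSubgroupOf]
    change (x : C G A n) ∈ boundaries G A n
    obtain ⟨y, -, hy⟩ := hx
    exact ⟨y, hy⟩)

/-- The subgroup `H_n(G;A)^Q` of `Q`-invariant homology classes. -/
def invariantClasses (n : ℕ) : AddSubgroup (barHomology G A n) :=
  ((⨅ q : Q, (boundaries G A n).comap (qMap G A Q q n - AddMonoidHom.id (C G A n))).addSubgroupOf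
    (cycles G A n)).map
      (QuotientAddGroup.mk' ((boundaries G A n).addSubgroupOf (cycles G A n)))

lemma chainMapOf_fixed_mem_invC (n : ℕ) (c : C (fixedSubgroup G Q) A n) :
    chainMapOf G A (fixedSubgroup G Q).subtype n c ∈ invC G A Q n := by
  have key : ∀ q : Q, (qMap G A Q q n).comp (chainMapOf G A (fixedSubgroup G Q).subtype n)
      = chainMapOf G A (fixedSubgroup G Q).subtype n := by
    intro q
    rw [qMap, chainMapOf_comp]
    congr 1
    ext x
    exact x.2 q
  rw [invC, AddSubgroup.mem_iInf]
  intro q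
  rw [AddMonoidHom.mem_ker, AddMonoidHom.sub_apply, sub_eq_zero, AddMonoidHom.id_apply,
    ← AddMonoidHom.comp_apply, key q]


lemma chainMapOf_barDFrom (n : ℕ) (c : C (fixedSubgroup G Q) A n) :
    barDFrom G A n (chainMapOf G A (fixedSubgroup G Q).subtype n c)
      = chainMapOf G A (fixedSubgroup G Q).subtype (n - 1)
          (barDFrom (fixedSubgroup G Q) A n c) := by
  match n with
  | 0 => simp [barDFrom]
  | n + 1 =>
      show (barD G A n) (chainMapOf G A (fixedSubgroup G Q).subtype (n + 1) c) = _
      rw [← AddMonoidHom.comp_apply, chainMapOf_barD]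
      rfl

/-- The map `H_n(G^Q;A) → H_n^Q(G;A)` induced by the inclusion of complexes. -/
def subIncl (n : ℕ) : barHomology (fixedSubgroup G Q) A n →+ invHomology G A Q n :=
  QuotientAddGroup.map _ _
    (((chainMapOf G A (fixedSubgroup G Q).subtype n).comp
        (cycles (fixedSubgroup G Q) A n).subtype).codRestrict (invCycles G A Q n) (by
      intro x
      rw [invCycles, AddSubgroup.mem_inf]
      refine ⟨chainMapOf_fixed_mem_invC G A Q n _, AddMonoidHom.mem_ker.mpr ?_⟩
      rw [AddMonoidHom.comp_apply, AddSubgroup.coe_subtype, chainMapOf_barDFrom,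
        AddMonoidHom.mem_ker.mp x.2, map_zero]))
    (by
      intro x hx
      rw [AddSubgroup.mem_addSubgroupOf] at hx
      obtain ⟨σ, hσ⟩ := hx
      rw [AddSubgroup.mem_comap, AddSubgroup.mem_addSubgroupOf]
      show ((chainMapOf G A (fixedSubgroup G Q).subtype n).comp
        (cycles (fixedSubgroup G Q) A n).subtype) x ∈ invBoundaries G A Q n
      rw [AddMonoidHom.comp_apply, AddSubgroup.coe_subtype, ← hσ, ← AddMonoidHom.comp_apply,
        ← chainMapOf_barD]
      exact ⟨chainMapOf G A (fixedSubgroup G Q).subtype (n + 1) σ,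
        chainMapOf_fixed_mem_invC G A Q (n + 1) σ, rfl⟩)

/-- The subgroup generated by differences `q • c - c`, i.e. the kernel of the map
to the coinvariants (the cellular chains of the quotient space `BG/Q`). -/
def W (n : ℕ) : AddSubgroup (C G A n) :=
  ⨆ q : Q, (qMap G A Q q n - AddMonoidHom.id (C G A n)).range

/-- Cycles of the coinvariants complex (the cellular chain complex of `BG/Q`),
presented as chains whose boundary lies in `W`. -/
def quotCycles (n : ℕ) : AddSubgroup (C G A n) := (W G A Q (n - 1)).comap (barDFrom G A n)

/-- Boundaries of the coinvariants complex, presented in `C_n(G;A)`. -/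
def quotBoundaries (n : ℕ) : AddSubgroup (C G A n) := W G A Q n ⊔ (barD G A n).range

/-- `H_n(BG/Q;A)`: the homology of the coinvariants complex, i.e. of the
cellular chain complex of the quotient CW-complex `BG/Q`. -/
abbrev quotHomology (n : ℕ) : Type _ :=
  quotCycles G A Q n ⧸ (quotBoundaries G A Q n).addSubgroupOf (quotCycles G A Q n)

/-- The image of the norm map `N : C_n(BG/Q) → C_n(G)^Q` sending the class of a
bar symbol to the sum over its `Q`-orbit. -/
def normImage (n : ℕ) : AddSubgroup (C G ℤ n) :=
  letI := Classical.decEq (Fin n → G)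
  AddSubgroup.closure {c | ∃ g : Fin n → G,
    c = ∑ x ∈ Finset.image (fun q : Q => fun j => q • g j) Finset.univ, Finsupp.single x (1 : ℤ)}

/-- The degree-`n` part of the cokernel `D_• = C_•(G)^Q / N(C_•(BG/Q))` of the norm map. -/
abbrev DChains (n : ℕ) : Type _ :=
  invC G ℤ Q n ⧸ (normImage G Q n).addSubgroupOf (invC G ℤ Q n)

/-- Cycles of the quotient complex `D_•`. -/
def DCycles (n : ℕ) : AddSubgroup (C G ℤ n) :=
  invC G ℤ Q n ⊓ (normImage G Q (n - 1)).comap (barDFrom G ℤ n)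

/-- Boundaries of the quotient complex `D_•`. -/
def DBoundaries (n : ℕ) : AddSubgroup (C G ℤ n) :=
  normImage G Q n ⊔ (invC G ℤ Q (n + 1)).map (barD G ℤ n)

/-- `h_n(D_•)`: the homology of the cokernel of the norm map. -/
abbrev DHomology (n : ℕ) : Type _ :=
  DCycles G Q n ⧸ (DBoundaries G Q n).addSubgroupOf (DCycles G Q n)

/-- Cellular cochains of `BG/Q` with `ℤ/2` coefficients: homomorphisms on chains. -/
abbrev Cochain (n : ℕ) : Type _ := C G ℤ n →+ ZMod 2

/-- Cochains vanishing on a subgroup of chains. -/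
def vanishing (n : ℕ) (S : AddSubgroup (C G ℤ n)) : AddSubgroup (Cochain G n) where
  carrier := {f | ∀ c ∈ S, f c = 0}
  zero_mem' := fun c _ => rfl
  add_mem' := fun hf hg c hc => by
    rw [AddMonoidHom.add_apply, hf c hc, hg c hc, add_zero]
  neg_mem' := fun hf c hc => by
    rw [AddMonoidHom.neg_apply, hf c hc, neg_zero]

/-- Precomposition with a boundary map as the coboundary operator. -/
def precomp {n m : ℕ} (d : C G ℤ m →+ C G ℤ n) : Cochain G n →+ Cochain G m :=
  AddMonoidHom.mk' (fun f => f.comp d) (fun f g => by ext c; simp)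

/-- Cocycles of the `ℤ/2`-cochain complex of `BG/Q`. -/
def quotCocycles (q : ℕ) : AddSubgroup (Cochain G q) :=
  vanishing G q (W G ℤ Q q) ⊓ (precomp G (barD G ℤ q)).ker

/-- Coboundaries of the `ℤ/2`-cochain complex of `BG/Q`. -/
def quotCoboundaries (q : ℕ) : AddSubgroup (Cochain G q) :=
  (vanishing G (q - 1) (W G ℤ Q (q - 1))).map (precomp G (barDFrom G ℤ q))

/-- `H^q(BG/Q; ℤ/2)`: the cellular cohomology of the quotient space with `ℤ/2` coefficients. -/
abbrev quotCohomology (q : ℕ) : Type _ :=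
  quotCocycles G Q q ⧸ (quotCoboundaries G Q q).addSubgroupOf (quotCocycles G Q q)

end Action

/-- The action of `ℤˣ ≅ ℤ/2` on a commutative group by inversion (negation):
the nontrivial element acts by `g ↦ g⁻¹`. -/
instance negAction (Γ : Type*) [CommGroup Γ] : MulDistribMulAction ℤˣ Γ where
  smul u g := g ^ (u : ℤ)
  one_smul g := by show g ^ ((1 : ℤˣ) : ℤ) = g; simp
  mul_smul u v g := by
    show g ^ ((↑(u * v) : ℤ)) = (g ^ (v : ℤ)) ^ (u : ℤ)
    rw [Units.val_mul, mul_comm, zpow_mul]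
  smul_mul u a b := mul_zpow a b (u : ℤ)
  smul_one u := one_zpow _

end
end IGC


namespace UP

noncomputable section

/-- Homogeneous bar resolution chains for `ℤ`. -/
abbrev B (n : ℕ) : Type := (Fin (n + 1) → ℤ) →₀ ℤ

lemma val_succAbove {m : ℕ} (i : Fin (m + 1)) (k : Fin m) :
    ((i.succAbove k : Fin (m + 1)) : ℕ) = if (k : ℕ) < (i : ℕ) then (k : ℕ) else (k : ℕ) + 1 := by
  rw [Fin.succAbove]
  split_ifs with h1 h2 h2
  · simp
  · exact absurd (by simpa [Fin.lt_def] using h1) h2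
  · exact absurd (by simpa [Fin.lt_def] using h2) h1
  · simp

/-- The homogeneous boundary map. -/
def dB (n : ℕ) : B (n + 1) →+ B n :=
  Finsupp.liftAddHom fun p =>
    { toFun := fun c => ∑ i : Fin (n + 2),
        Finsupp.single (p ∘ Fin.succAbove i) (((-1 : ℤ) ^ (i : ℕ)) • c)
      map_zero' := by simp
      map_add' := fun a b => by
        simp only [smul_add, Finsupp.single_add, Finset.sum_add_distrib] }

lemma dB_single (n : ℕ) (p : Fin (n + 2) → ℤ) (c : ℤ) :
    dB n (Finsupp.single p c) =
      ∑ i : Fin (n + 2), Finsupp.single (p ∘ Fin.succAbove i) (((-1 : ℤ) ^ (i : ℕ)) • c) := by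
  rw [dB, Finsupp.liftAddHom_apply_single]; rfl

lemma succAbove_succAbove {n : ℕ} (i : Fin (n + 3)) (j : Fin (n + 2)) (h : (i : ℕ) ≤ (j : ℕ))
    (p : Fin (n + 3) → ℤ) :
    (p ∘ Fin.succAbove i) ∘ Fin.succAbove j =
      (p ∘ Fin.succAbove (j.succ)) ∘ Fin.succAbove (⟨(i : ℕ), by omega⟩ : Fin (n + 2)) := by
  funext k
  simp only [Function.comp_apply]
  congr 1
  apply Fin.ext
  simp only [val_succAbove, Fin.val_succ]
  split_ifs <;> omega

lemma dd (n : ℕ) (x : B (n + 2)) : dB n (dB (n + 1) x) = 0 := by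
  induction x using Finsupp.induction_linear with
  | zero => simp
  | add a b ha hb => simp [ha, hb]
  | single p c =>
    rw [dB_single, map_sum]
    simp only [dB_single]
    rw [← Finset.sum_product']
    apply Finset.sum_ninvolution
      (g := fun ij : Fin (n + 3) × Fin (n + 2) =>
        if _ : (ij.1 : ℕ) ≤ (ij.2 : ℕ) then (ij.2.succ, ⟨(ij.1 : ℕ), by omega⟩)
        else (⟨(ij.2 : ℕ), by omega⟩, ⟨(ij.1 : ℕ) - 1, by omega⟩))
    · intro ⟨i, j⟩
      by_cases h : (i : ℕ) ≤ (j : ℕ)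
      · rw [dif_pos h]
        rw [succAbove_succAbove i j h p, ← Finsupp.single_add]
        convert Finsupp.single_zero _
        · rfl
        have key : ((-1 : ℤ) ^ ((j.succ : ℕ))) = -((-1 : ℤ) ^ (j : ℕ)) := by
          rw [Fin.val_succ, pow_succ]; ring
        rw [key]
        simp only [smul_eq_mul]; ring
      · rw [dif_neg h]
        push_neg at h
        have h' : ((⟨(j : ℕ), by omega⟩ : Fin (n + 3)) : ℕ) ≤ ((⟨(i : ℕ) - 1, by omega⟩ : Fin (n + 2)) : ℕ) := by
          simp; omega
        rw [succAbove_succAbove _ _ h' p]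
        have e1 : (Fin.succ (⟨(i : ℕ) - 1, by omega⟩ : Fin (n + 2))) = i := by
          apply Fin.ext; simp; omega
        have e2 : (⟨((⟨(j : ℕ), by omega⟩ : Fin (n + 3)) : ℕ), by omega⟩ : Fin (n + 2)) = j := by
          apply Fin.ext; simp
        rw [e1, e2, ← Finsupp.single_add]
        convert Finsupp.single_zero _
        · rfl
        have key : ((-1 : ℤ) ^ ((i : ℕ))) = -((-1 : ℤ) ^ ((i : ℕ) - 1)) := by
          obtain ⟨b, hb⟩ : ∃ b, (i : ℕ) = b + 1 := ⟨(i : ℕ) - 1, by omega⟩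
          rw [hb, pow_succ]
          simp
        rw [key]
        simp only [smul_eq_mul]; ring
    · intro ⟨i, j⟩ _
      by_cases h : (i : ℕ) ≤ (j : ℕ)
      · rw [dif_pos h]
        simp only [ne_eq, Prod.mk.injEq, Fin.ext_iff, Fin.val_succ, not_and]
        omega
      · rw [dif_neg h]
        simp only [ne_eq, Prod.mk.injEq, Fin.ext_iff, not_and]
        omega
    · intro ⟨i, j⟩; exact Finset.mem_univ _
    · intro ⟨i, j⟩
      by_cases h : (i : ℕ) ≤ (j : ℕ)
      · rw [dif_pos h]
        have h2 : ¬ ((j.succ : ℕ) ≤ ((⟨(i : ℕ), by omega⟩ : Fin (n + 2)) : ℕ)) := by simp; omega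
        rw [dif_neg h2]
        simp only [Prod.mk.injEq, Fin.ext_iff, Fin.val_succ, Fin.val_mk, true_and, and_true]
        omega
      · rw [dif_neg h]
        push_neg at h
        have h2 : ((⟨(j : ℕ), by omega⟩ : Fin (n + 3)) : ℕ) ≤ ((⟨(i : ℕ) - 1, by omega⟩ : Fin (n + 2)) : ℕ) := by
          simp; omega
        rw [dif_pos h2]
        simp only [Prod.mk.injEq, Fin.ext_iff, Fin.val_succ, Fin.val_mk, true_and, and_true]
        omega

/-- Translation action of `ℤ` on homogeneous chains. -/
def T (k : ℤ) (n : ℕ) : B n →+ B n :=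
  Finsupp.mapDomain.addMonoidHom (fun p j => p j + k)

lemma T_single (k : ℤ) {n : ℕ} (p : Fin (n + 1) → ℤ) (c : ℤ) :
    T k n (Finsupp.single p c) = Finsupp.single (fun j => p j + k) c := by
  rw [T, Finsupp.mapDomain.addMonoidHom_apply, Finsupp.mapDomain_single]

lemma ext_hom {n : ℕ} {M : Type*} [AddCommGroup M] (F G : B n →+ M)
    (h : ∀ p : Fin (n + 1) → ℤ, F (Finsupp.single p 1) = G (Finsupp.single p 1)) : F = G := by
  apply Finsupp.addHom_ext
  intro p c
  have : (Finsupp.single p c : B n) = c • Finsupp.single p 1 := by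
    rw [Finsupp.smul_single, smul_eq_mul, mul_one]
  rw [this, map_zsmul, map_zsmul, h]

lemma T_zero {n : ℕ} (x : B n) : T 0 n x = x := by
  have : T 0 n = AddMonoidHom.id _ := by
    apply ext_hom; intro p; rw [T_single]; simp
  rw [this]; rfl

lemma T_T (k l : ℤ) {n : ℕ} (x : B n) : T k n (T l n x) = T (l + k) n x := by
  have : (T k n).comp (T l n) = T (l + k) n := by
    apply ext_hom; intro p
    rw [AddMonoidHom.comp_apply, T_single, T_single, T_single]
    congr 1; funext j; ring
  calc T k n (T l n x) = ((T k n).comp (T l n)) x := rfl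
    _ = T (l + k) n x := by rw [this]

lemma dB_T (k : ℤ) (n : ℕ) (x : B (n + 1)) : dB n (T k (n + 1) x) = T k n (dB n x) := by
  have : (dB n).comp (T k (n + 1)) = (T k n).comp (dB n) := by
    apply ext_hom; intro p
    rw [AddMonoidHom.comp_apply, AddMonoidHom.comp_apply, T_single, dB_single, dB_single,
      map_sum]
    refine Finset.sum_congr rfl fun i _ => ?_
    rw [T_single]
    rfl
  calc dB n (T k (n+1) x) = ((dB n).comp (T k (n + 1))) x := rfl
    _ = T k n (dB n x) := by rw [this]; rfl

/-- The cone operator. -/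
def sB (n : ℕ) : B n →+ B (n + 1) :=
  Finsupp.mapDomain.addMonoidHom (fun p => Fin.cons 0 p)

lemma sB_single {n : ℕ} (p : Fin (n + 1) → ℤ) (c : ℤ) :
    sB n (Finsupp.single p c) = Finsupp.single (Fin.cons 0 p) c := by
  rw [sB, Finsupp.mapDomain.addMonoidHom_apply, Finsupp.mapDomain_single]

lemma cons_succAbove {n : ℕ} (p : Fin (n + 2) → ℤ) (i : Fin (n + 2)) :
    (Fin.cons 0 p : Fin (n + 3) → ℤ) ∘ Fin.succAbove i.succ
      = Fin.cons 0 (p ∘ Fin.succAbove i) := by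
  funext k
  induction k using Fin.cases with
  | zero =>
    have : Fin.succAbove i.succ 0 = 0 := by
      rw [Fin.succAbove_of_castSucc_lt]
      · rfl
      · simp [Fin.lt_def]
    simp [this]
  | succ k =>
    have : Fin.succAbove i.succ k.succ = (Fin.succAbove i k).succ := Fin.succ_succAbove_succ i k
    simp [this]

/-- The contraction identity. -/
lemma dB_sB (n : ℕ) (y : B (n + 1)) :
    dB (n + 1) (sB (n + 1) y) = y - sB n (dB n y) := by
  induction y using Finsupp.induction_linear with
  | zero => simp
  | add a b ha hb => rw [map_add, map_add, ha, hb, map_add, map_add]; abel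
  | single p c =>
    rw [sB_single, dB_single, Fin.sum_univ_succ]
    have h0 : (Fin.cons 0 p : Fin (n + 3) → ℤ) ∘ Fin.succAbove 0 = p := by
      funext k; simp [Fin.succAbove_zero]
    rw [h0]
    simp only [Fin.val_zero, pow_zero, one_smul]
    have : ∀ i : Fin (n + 2),
        Finsupp.single ((Fin.cons 0 p : Fin (n + 3) → ℤ) ∘ Fin.succAbove i.succ)
            (((-1 : ℤ) ^ ((i.succ : Fin (n+3)) : ℕ)) • c)
          = - Finsupp.single (Fin.cons 0 (p ∘ Fin.succAbove i)) (((-1 : ℤ) ^ (i : ℕ)) • c) := by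
      intro i
      rw [cons_succAbove, ← Finsupp.single_neg]
      congr 1
      simp only [smul_eq_mul, Fin.val_succ, pow_succ]
      ring
    rw [Finset.sum_congr rfl fun i _ => this i, dB_single, map_sum]
    simp only [sB_single]
    rw [Finset.sum_neg_distrib, sub_eq_add_neg]

/-- The unit edge from `m` to `m + 1`. -/
def edge (m : ℤ) : B 1 := Finsupp.single (fun j : Fin 2 => m + ((j : ℕ) : ℤ)) 1

/-- The path from `0` to `m` as a `1`-chain. -/
def Phi (m : ℤ) : B 1 :=
  (∑ j ∈ Finset.range m.toNat, edge (j : ℤ)) - ∑ j ∈ Finset.range (-m).toNat, edge (-(j : ℤ) - 1)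

lemma Phi_zero : Phi 0 = 0 := by simp [Phi]

lemma Phi_succ (m : ℤ) : Phi (m + 1) = Phi m + edge m := by
  rcases le_or_gt 0 m with h | h
  · have h1 : (m + 1).toNat = m.toNat + 1 := by omega
    have h2 : (-m).toNat = 0 := by omega
    have h3 : (-(m + 1)).toNat = 0 := by omega
    have h4 : ((m.toNat : ℕ) : ℤ) = m := by omega
    rw [Phi, Phi, h1, h2, h3, Finset.sum_range_succ, h4]
    simp
  · have h1 : (m + 1).toNat = 0 := by omega
    have h2 : m.toNat = 0 := by omega
    have h3 : (-m).toNat = (-(m + 1)).toNat + 1 := by omega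
    have h4 : (-(((-(m + 1)).toNat : ℕ) : ℤ) - 1) = m := by omega
    rw [Phi, Phi, h1, h2, h3, Finset.sum_range_succ, h4]
    simp

lemma T_edge (k m : ℤ) : T k 1 (edge m) = edge (m + k) := by
  rw [edge, T_single]
  congr 1
  funext j
  ring

lemma Phi_cocycle (k m : ℤ) : Phi (m + k) = Phi k + T k 1 (Phi m) := by
  induction m using Int.induction_on with
  | zero => rw [Phi_zero, map_zero, add_zero, zero_add]
  | succ m ih =>
    have : (m : ℤ) + 1 + k = ((m : ℤ) + k) + 1 := by ring
    rw [this, Phi_succ, ih, Phi_succ, map_add, T_edge, add_assoc]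
  | pred m ih =>
    have e1 : Phi (-(m : ℤ) - 1) = Phi (-(m : ℤ)) - edge (-(m : ℤ) - 1) := by
      have := Phi_succ (-(m : ℤ) - 1)
      rw [sub_add_cancel] at this
      rw [this]; abel
    have e2 : Phi (-(m : ℤ) - 1 + k) = Phi (-(m : ℤ) + k) - edge (-(m : ℤ) - 1 + k) := by
      have := Phi_succ (-(m : ℤ) - 1 + k)
      have e : -(m : ℤ) - 1 + k + 1 = -(m : ℤ) + k := by ring
      rw [e] at this
      rw [this]; abel
    rw [e2, ih, e1, map_sub, T_edge]
    abel

lemma dB_edge (m : ℤ) : dB 0 (edge m) =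
    Finsupp.single (fun _ => m + 1) 1 - Finsupp.single (fun _ => m) 1 := by
  rw [edge, dB_single, Fin.sum_univ_two]
  have h0 : ((fun j : Fin 2 => m + ((j : ℕ) : ℤ)) ∘ Fin.succAbove (0 : Fin 2)) = fun _ => m + 1 := by
    funext j
    have : ∀ j : Fin 1, Fin.succAbove (0 : Fin 2) j = 1 := by decide
    simp [this]
  have h1 : ((fun j : Fin 2 => m + ((j : ℕ) : ℤ)) ∘ Fin.succAbove (1 : Fin 2)) = fun _ => m := by
    funext j
    have : ∀ j : Fin 1, Fin.succAbove (1 : Fin 2) j = 0 := by decide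
    simp [this]
  rw [h0, h1]
  simp [sub_eq_add_neg]

lemma dB_Phi (m : ℤ) : dB 0 (Phi m) =
    Finsupp.single (fun _ => m) 1 - Finsupp.single (fun _ => (0 : ℤ)) 1 := by
  induction m using Int.induction_on with
  | zero => rw [Phi_zero, map_zero, sub_self]
  | succ m ih => rw [Phi_succ, map_add, ih, dB_edge]; abel
  | pred m ih =>
    have e1 : Phi (-(m : ℤ) - 1) = Phi (-(m : ℤ)) - edge (-(m : ℤ) - 1) := by
      have := Phi_succ (-(m : ℤ) - 1)
      rw [sub_add_cancel] at this
      rw [this]; abel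
    rw [e1, map_sub, ih, dB_edge]
    have : (-(m : ℤ) - 1) + 1 = -(m : ℤ) := by ring
    rw [this]
    abel

/-- The composite `g ∘ f` of the comparison maps with the small resolution. -/
def theta : (n : ℕ) → B n →+ B n
  | 0 => AddMonoidHom.id _
  | 1 => Finsupp.liftAddHom fun p => zmultiplesHom _ (Phi (p 1) - Phi (p 0))
  | (_ + 2) => 0

lemma theta_one_single (p : Fin 2 → ℤ) (c : ℤ) :
    theta 1 (Finsupp.single p c) = c • (Phi (p 1) - Phi (p 0)) := by
  rw [theta, Finsupp.liftAddHom_apply_single, zmultiplesHom_apply]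

lemma theta_T (n : ℕ) (k : ℤ) (x : B n) : theta n (T k n x) = T k n (theta n x) := by
  match n with
  | 0 => rfl
  | 1 =>
    have : (theta 1).comp (T k 1) = (T k 1).comp (theta 1) := by
      apply ext_hom; intro p
      rw [AddMonoidHom.comp_apply, AddMonoidHom.comp_apply, T_single, theta_one_single,
        theta_one_single]
      have c1 : Phi (p 1 + k) = Phi k + T k 1 (Phi (p 1)) := Phi_cocycle k (p 1)
      have c0 : Phi (p 0 + k) = Phi k + T k 1 (Phi (p 0)) := Phi_cocycle k (p 0)
      rw [one_smul, one_smul, c1, c0, map_sub]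
      abel
    calc theta 1 (T k 1 x) = ((theta 1).comp (T k 1)) x := rfl
      _ = T k 1 (theta 1 x) := by rw [this]; rfl
  | (n + 2) => simp [theta]

lemma dB_theta_one (x : B 1) : dB 0 (theta 1 x) = dB 0 x := by
  have : (dB 0).comp (theta 1) = dB 0 := by
    apply ext_hom; intro p
    rw [AddMonoidHom.comp_apply, theta_one_single, one_smul, map_sub, dB_Phi, dB_Phi,
      dB_single, Fin.sum_univ_two]
    have h0 : (p ∘ Fin.succAbove (0 : Fin 2)) = fun _ => p 1 := by
      funext j
      have hj : j = 0 := Subsingleton.elim j 0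
      subst hj
      show p (Fin.succAbove (0 : Fin 2) 0) = p 1
      rfl
    have h1 : (p ∘ Fin.succAbove (1 : Fin 2)) = fun _ => p 0 := by
      funext j
      have hj : j = 0 := Subsingleton.elim j 0
      subst hj
      show p (Fin.succAbove (1 : Fin 2) 0) = p 0
      rfl
    rw [h0, h1]
    simp [sub_eq_add_neg]
  calc dB 0 (theta 1 x) = ((dB 0).comp (theta 1)) x := rfl
    _ = dB 0 x := by rw [this]

lemma theta_one_dB (x : B 2) : theta 1 (dB 1 x) = 0 := by
  have : (theta 1).comp (dB 1) = 0 := by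
    apply ext_hom; intro p
    rw [AddMonoidHom.comp_apply, dB_single, map_sum, Fin.sum_univ_three]
    simp only [theta_one_single]
    have e0 : ∀ j : Fin 2, Fin.succAbove (0 : Fin 3) j = j.succ := by decide
    have e10 : Fin.succAbove (1 : Fin 3) 0 = 0 := by decide
    have e11 : Fin.succAbove (1 : Fin 3) 1 = 2 := by decide
    have e20 : Fin.succAbove (2 : Fin 3) 0 = 0 := by decide
    have e21 : Fin.succAbove (2 : Fin 3) 1 = 1 := by decide
    simp only [Function.comp_apply, e0, e10, e11, e20, e21]
    norm_num
  calc theta 1 (dB 1 x) = ((theta 1).comp (dB 1)) x := rfl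
    _ = 0 := by rw [this]; rfl

/-- Normalized basis element. -/
def xnorm {n : ℕ} (p : Fin (n + 1) → ℤ) : B n := Finsupp.single (fun j => p j - p 0) 1

/-- The equivariant chain homotopy from `theta` to the identity. -/
def hB : (n : ℕ) → B n →+ B (n + 1)
  | 0 => 0
  | (n + 1) => Finsupp.liftAddHom fun p => zmultiplesHom _
      (T (p 0) (n + 2) (sB (n + 1)
        (theta (n + 1) (xnorm p) - xnorm p - hB n (dB n (xnorm p)))))

lemma hB_single {n : ℕ} (p : Fin (n + 2) → ℤ) (c : ℤ) :
    hB (n + 1) (Finsupp.single p c) = c • T (p 0) (n + 2) (sB (n + 1)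
      (theta (n + 1) (xnorm p) - xnorm p - hB n (dB n (xnorm p)))) := by
  rw [hB, Finsupp.liftAddHom_apply_single, zmultiplesHom_apply]

lemma hB_T (n : ℕ) (k : ℤ) (x : B n) : hB n (T k n x) = T k (n + 1) (hB n x) := by
  match n with
  | 0 => simp [hB]
  | (n + 1) =>
    have : (hB (n + 1)).comp (T k (n + 1)) = (T k (n + 2)).comp (hB (n + 1)) := by
      apply ext_hom; intro p
      rw [AddMonoidHom.comp_apply, AddMonoidHom.comp_apply, T_single, hB_single, hB_single]
      have hx : xnorm (fun j => p j + k) = xnorm p := by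
        rw [xnorm, xnorm]
        congr 1
        funext j
        ring
      rw [hx]
      rw [one_smul, one_smul, ← T_T (k := k) (l := p 0)]
    calc hB (n + 1) (T k (n + 1) x) = ((hB (n + 1)).comp (T k (n + 1))) x := rfl
      _ = T k (n + 2) (hB (n + 1) x) := by rw [this]; rfl

lemma xnorm_eq {n : ℕ} (p : Fin (n + 1) → ℤ) (hp : p 0 = 0) : xnorm p = Finsupp.single p 1 := by
  rw [xnorm]
  congr 1
  funext j
  rw [hp, sub_zero]

/-- Core of the homotopy identity. -/
lemma hIdent_core (n : ℕ)
    (hd0 : ∀ x : B (n + 1), dB n (theta (n + 1) x - x - hB n (dB n x)) = 0) :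
    ∀ x : B (n + 1), dB (n + 1) (hB (n + 1) x) + hB n (dB n x) = theta (n + 1) x - x := by
  have key : ((dB (n + 1)).comp (hB (n + 1))) + ((hB n).comp (dB n))
      = theta (n + 1) - AddMonoidHom.id _ := by
    apply ext_hom; intro p
    set q : Fin (n + 2) → ℤ := fun j => p j - p 0 with hq
    have hq0 : q 0 = 0 := sub_self _
    have hpq : Finsupp.single p 1 = T (p 0) (n + 1) (Finsupp.single q 1) := by
      rw [T_single]
      congr 1
      funext j
      simp [hq]
    have hnorm : dB (n + 1) (hB (n + 1) (Finsupp.single q 1))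
        + hB n (dB n (Finsupp.single q 1))
        = theta (n + 1) (Finsupp.single q 1) - Finsupp.single q 1 := by
      have hx : hB (n + 1) (Finsupp.single q 1)
          = sB (n + 1) (theta (n + 1) (Finsupp.single q 1) - Finsupp.single q 1
              - hB n (dB n (Finsupp.single q 1))) := by
        rw [hB_single, xnorm_eq q hq0, hq0, T_zero, one_smul]
      rw [hx, dB_sB, hd0, map_zero, sub_zero]
      abel
    simp only [AddMonoidHom.add_apply, AddMonoidHom.comp_apply, AddMonoidHom.sub_apply,
      AddMonoidHom.id_apply]
    rw [hpq, hB_T, dB_T, dB_T, hB_T, ← map_add, hnorm, map_sub, theta_T]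
  intro x
  have := DFunLike.congr_fun key x
  simpa using this

lemma theta_two_plus (m : ℕ) (x : B (m + 2)) : theta (m + 2) x = 0 := rfl

/-- The homotopy identity `d h + h d = θ - 1`. -/
lemma hIdent (n : ℕ) : ∀ x : B (n + 1),
    dB (n + 1) (hB (n + 1) x) + hB n (dB n x) = theta (n + 1) x - x := by
  induction n with
  | zero =>
    apply hIdent_core 0
    intro x
    rw [show (hB 0 : B 0 →+ B 1) = 0 from rfl]
    simp only [AddMonoidHom.zero_apply, sub_zero]
    rw [map_sub, dB_theta_one, sub_self]
  | succ m ih =>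
    apply hIdent_core (m + 1)
    intro x
    have hdd : dB m (dB (m + 1) x) = 0 := dd m x
    have h1 : dB (m + 1) (hB (m + 1) (dB (m + 1) x))
        = theta (m + 1) (dB (m + 1) x) - dB (m + 1) x := by
      have h2 := ih (dB (m + 1) x)
      rw [hdd, map_zero, add_zero] at h2
      exact h2
    rw [theta_two_plus, map_sub, map_sub, map_zero, h1]
    have h3 : theta (m + 1) (dB (m + 1) x) = 0 := by
      match m with
      | 0 => exact theta_one_dB x
      | (m' + 1) => exact theta_two_plus m' _
    rw [h3]
    abel


end
end UP

namespace UP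
noncomputable section

abbrev M := Multiplicative ℤ

lemma extC_hom {n : ℕ} {M' : Type*} [AddCommGroup M'] (F G : IGC.C M ℤ n →+ M')
    (h : ∀ a : Fin n → M, F (Finsupp.single a 1) = G (Finsupp.single a 1)) : F = G := by
  apply Finsupp.addHom_ext
  intro a c
  have : (Finsupp.single a c : IGC.C M ℤ n) = c • Finsupp.single a 1 := by
    rw [Finsupp.smul_single, smul_eq_mul, mul_one]
  rw [this, map_zsmul, map_zsmul, h]

/-- Successive differences, the projection to coinvariants. -/
def pbar {n : ℕ} (p : Fin (n + 1) → ℤ) : Fin n → M :=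
  fun j => Multiplicative.ofAdd (p j.succ - p j.castSucc)

def piB (n : ℕ) : B n →+ IGC.C M ℤ n := Finsupp.mapDomain.addMonoidHom pbar

lemma piB_single {n : ℕ} (p : Fin (n + 1) → ℤ) (c : ℤ) :
    piB n (Finsupp.single p c) = Finsupp.single (pbar p) c := by
  rw [piB, Finsupp.mapDomain.addMonoidHom_apply, Finsupp.mapDomain_single]

lemma pbar_face {n : ℕ} (p : Fin (n + 2) → ℤ) (i : Fin (n + 2)) :
    pbar (p ∘ Fin.succAbove i) = IGC.barFace i (pbar p) := by
  funext j
  rw [IGC.barFace]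
  split_ifs with h1 h2
  · show Multiplicative.ofAdd (p (Fin.succAbove i j.succ) - p (Fin.succAbove i j.castSucc))
      = Multiplicative.ofAdd (p j.castSucc.succ - p j.castSucc.castSucc)
    have e1 : Fin.succAbove i j.succ = j.castSucc.succ := by
      apply Fin.ext
      rw [val_succAbove]
      simp only [Fin.val_succ, Fin.coe_castSucc]
      split_ifs <;> omega
    have e2 : Fin.succAbove i j.castSucc = j.castSucc.castSucc := by
      apply Fin.ext
      rw [val_succAbove]
      simp only [Fin.val_succ, Fin.coe_castSucc]
      split_ifs <;> omega
    rw [e1, e2]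
  · show Multiplicative.ofAdd (p (Fin.succAbove i j.succ) - p (Fin.succAbove i j.castSucc))
      = Multiplicative.ofAdd (p j.castSucc.succ - p j.castSucc.castSucc)
        * Multiplicative.ofAdd (p j.succ.succ - p j.succ.castSucc)
    have e1 : Fin.succAbove i j.succ = j.succ.succ := by
      apply Fin.ext
      rw [val_succAbove]
      simp only [Fin.val_succ, Fin.coe_castSucc]
      split_ifs <;> omega
    have e2 : Fin.succAbove i j.castSucc = j.castSucc.castSucc := by
      apply Fin.ext
      rw [val_succAbove]
      simp only [Fin.val_succ, Fin.coe_castSucc]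
      split_ifs <;> omega
    have e3 : j.castSucc.succ = j.succ.castSucc := Fin.succ_castSucc j
    rw [e1, e2, e3, ← ofAdd_add]
    congr 1
    ring
  · show Multiplicative.ofAdd (p (Fin.succAbove i j.succ) - p (Fin.succAbove i j.castSucc))
      = Multiplicative.ofAdd (p j.succ.succ - p j.succ.castSucc)
    have e1 : Fin.succAbove i j.succ = j.succ.succ := by
      apply Fin.ext
      rw [val_succAbove]
      simp only [Fin.val_succ, Fin.coe_castSucc]
      split_ifs <;> omega
    have e2 : Fin.succAbove i j.castSucc = j.succ.castSucc := by
      apply Fin.ext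
      rw [val_succAbove]
      simp only [Fin.val_succ, Fin.coe_castSucc]
      split_ifs <;> omega
    rw [e1, e2]

lemma piB_dB (n : ℕ) (x : B (n + 1)) :
    IGC.barD M ℤ n (piB (n + 1) x) = piB n (dB n x) := by
  have key : (IGC.barD M ℤ n).comp (piB (n + 1)) = (piB n).comp (dB n) := by
    apply ext_hom; intro p
    rw [AddMonoidHom.comp_apply, AddMonoidHom.comp_apply, piB_single, IGC.barD_single,
      dB_single, map_sum]
    refine Finset.sum_congr rfl fun i _ => ?_
    rw [piB_single, pbar_face]
  exact (DFunLike.congr_fun key x)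

lemma piB_T (k : ℤ) (n : ℕ) (x : B n) : piB n (T k n x) = piB n x := by
  have key : (piB n).comp (T k n) = piB n := by
    apply ext_hom; intro p
    rw [AddMonoidHom.comp_apply, T_single, piB_single, piB_single]
    congr 1
    funext j
    show Multiplicative.ofAdd ((p j.succ + k) - (p j.castSucc + k)) = _
    congr 1
    ring
  exact DFunLike.congr_fun key x

/-- The section of `pbar` given by partial sums. -/
def sig {n : ℕ} (a : Fin n → M) : Fin (n + 1) → ℤ :=
  fun j => ∑ t : Fin n, if (t : ℕ) < (j : ℕ) then Multiplicative.toAdd (a t) else 0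

def sigHom (n : ℕ) : IGC.C M ℤ n →+ B n := Finsupp.mapDomain.addMonoidHom sig

lemma sigHom_single {n : ℕ} (a : Fin n → M) (c : ℤ) :
    sigHom n (Finsupp.single a c) = Finsupp.single (sig a) c := by
  rw [sigHom, Finsupp.mapDomain.addMonoidHom_apply, Finsupp.mapDomain_single]

lemma sig_zero {n : ℕ} (a : Fin n → M) : sig a 0 = 0 := by
  rw [sig]
  refine Finset.sum_eq_zero fun t _ => if_neg (by simp)

lemma sig_step {n : ℕ} (a : Fin n → M) (t : Fin n) :
    sig a t.succ = sig a t.castSucc + Multiplicative.toAdd (a t) := by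
  rw [sig, sig]
  have key : ∀ u : Fin n,
      (if (u : ℕ) < (t.succ : ℕ) then Multiplicative.toAdd (a u) else 0)
        = (if (u : ℕ) < (t.castSucc : ℕ) then Multiplicative.toAdd (a u) else 0)
          + (if u = t then Multiplicative.toAdd (a u) else 0) := by
    intro u
    rcases lt_trichotomy ((u : ℕ)) ((t : ℕ)) with h | h | h
    · rw [if_pos (by simp; omega), if_pos (by simpa using h), if_neg (by
        intro he; rw [he] at h; omega), add_zero]
    · have he : u = t := Fin.ext h
      rw [if_pos (by simp; omega), if_neg (by simp; omega), if_pos he, zero_add]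
    · rw [if_neg (by simp; omega), if_neg (by simp; omega), if_neg (by
        intro he; rw [he] at h; omega), add_zero]
  rw [Finset.sum_congr rfl fun u _ => key u, Finset.sum_add_distrib]
  congr 1
  rw [Finset.sum_ite_eq' Finset.univ t (fun u => Multiplicative.toAdd (a u))]
  simp

lemma pbar_sig {n : ℕ} (a : Fin n → M) : pbar (sig a) = a := by
  funext t
  show Multiplicative.ofAdd (sig a t.succ - sig a t.castSucc) = a t
  rw [sig_step]
  simp

lemma piB_sigHom (n : ℕ) (c : IGC.C M ℤ n) : piB n (sigHom n c) = c := by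
  have key : (piB n).comp (sigHom n) = AddMonoidHom.id _ := by
    apply extC_hom; intro a
    rw [AddMonoidHom.comp_apply, sigHom_single, piB_single, pbar_sig, AddMonoidHom.id_apply]
  exact DFunLike.congr_fun key c

lemma sig_pbar {n : ℕ} (p : Fin (n + 1) → ℤ) : sig (pbar p) = fun j => p j - p 0 := by
  funext j
  induction j using Fin.induction with
  | zero => rw [sig_zero, sub_self]
  | succ j ih =>
    rw [sig_step, ih]
    show (p j.castSucc - p 0) + Multiplicative.toAdd (Multiplicative.ofAdd (p j.succ - p j.castSucc)) = _
    rw [toAdd_ofAdd]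
    ring

lemma inv_factor {n : ℕ} {M' : Type*} [AddCommGroup M'] (ψ : B n →+ M')
    (hψ : ∀ k x, ψ (T k n x) = ψ x) {x y : B n} (hxy : piB n x = piB n y) : ψ x = ψ y := by
  have key : ψ = (Finsupp.liftAddHom fun a =>
      zmultiplesHom M' (ψ (Finsupp.single (sig a) 1))).comp (piB n) := by
    apply ext_hom; intro p
    rw [AddMonoidHom.comp_apply, piB_single, Finsupp.liftAddHom_apply_single,
      zmultiplesHom_apply, one_smul, sig_pbar]
    have e : Finsupp.single p (1 : ℤ)
        = T (p 0) n (Finsupp.single (fun j => p j - p 0) 1) := by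
      rw [T_single]
      congr 1
      funext j
      ring
    rw [e, hψ]
  rw [key, AddMonoidHom.comp_apply, AddMonoidHom.comp_apply, hxy]

/-- The homotopy on the bar complex of `ℤ`. -/
def hC (n : ℕ) : IGC.C M ℤ n →+ IGC.C M ℤ (n + 1) :=
  (piB (n + 1)).comp ((hB n).comp (sigHom n))

lemma hC_ident (n : ℕ) (c : IGC.C M ℤ (n + 1)) :
    IGC.barD M ℤ (n + 1) (hC (n + 1) c) + hC n (IGC.barD M ℤ n c)
      = piB (n + 1) (theta (n + 1) (sigHom (n + 1) c)) - c := by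
  set x := sigHom (n + 1) c with hx
  have h1 : IGC.barD M ℤ (n + 1) (hC (n + 1) c)
      = piB (n + 1) (theta (n + 1) x) - c - piB (n + 1) (hB n (dB n x)) := by
    show IGC.barD M ℤ (n + 1) (piB (n + 2) (hB (n + 1) x)) = _
    rw [piB_dB (n + 1) (hB (n + 1) x)]
    have h2 : dB (n + 1) (hB (n + 1) x) = theta (n + 1) x - x - hB n (dB n x) := by
      have := hIdent n x
      rw [eq_sub_iff_add_eq]
      exact this
    rw [h2, map_sub, map_sub, piB_sigHom]
  have h3 : hC n (IGC.barD M ℤ n c) = piB (n + 1) (hB n (dB n x)) := by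
    show piB (n + 1) (hB n (sigHom n (IGC.barD M ℤ n c))) = _
    have hinv : ∀ k y, ((piB (n + 1)).comp (hB n)) (T k n y) = ((piB (n + 1)).comp (hB n)) y := by
      intro k y
      rw [AddMonoidHom.comp_apply, AddMonoidHom.comp_apply, hB_T, piB_T]
    have hxy : piB n (sigHom n (IGC.barD M ℤ n c)) = piB n (dB n x) := by
      rw [piB_sigHom, ← piB_dB, piB_sigHom]
    exact inv_factor _ hinv hxy
  rw [h1, h3]
  abel

/-- The unit class in degree one. -/
def uC : IGC.C M ℤ 1 := Finsupp.single (fun _ => Multiplicative.ofAdd (1 : ℤ)) 1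

lemma piB_edge (m : ℤ) : piB 1 (edge m) = uC := by
  rw [edge, piB_single, uC]
  congr 1
  funext j
  have hj : j = 0 := Subsingleton.elim j 0
  subst hj
  show Multiplicative.ofAdd ((m + (((0 : Fin 1).succ : ℕ) : ℤ)) - (m + (((0 : Fin 1).castSucc : ℕ) : ℤ))) = _
  norm_num

lemma piB_Phi (m : ℤ) : piB 1 (Phi m) = m • uC := by
  induction m using Int.induction_on with
  | zero => rw [Phi_zero, map_zero, zero_smul]
  | succ m ih => rw [Phi_succ, map_add, ih, piB_edge, add_smul, one_smul]
  | pred m ih =>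
    have e1 : Phi (-(m : ℤ) - 1) = Phi (-(m : ℤ)) - edge (-(m : ℤ) - 1) := by
      have := Phi_succ (-(m : ℤ) - 1)
      rw [sub_add_cancel] at this
      rw [this]; abel
    rw [e1, map_sub, ih, piB_edge, sub_smul, one_smul]

/-- The weight of a degree-one chain. -/
def w : IGC.C M ℤ 1 →+ ℤ :=
  Finsupp.liftAddHom fun a => zmultiplesHom ℤ (Multiplicative.toAdd (a 0))

lemma w_single (a : Fin 1 → M) (c : ℤ) :
    w (Finsupp.single a c) = c * Multiplicative.toAdd (a 0) := by
  rw [w, Finsupp.liftAddHom_apply_single, zmultiplesHom_apply, smul_eq_mul]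

lemma theta_sig_one (c : IGC.C M ℤ 1) :
    piB 1 (theta 1 (sigHom 1 c)) = w c • uC := by
  have key : ((piB 1).comp ((theta 1).comp (sigHom 1)))
      = (zmultiplesHom _ uC).comp w := by
    apply extC_hom; intro a
    rw [AddMonoidHom.comp_apply, AddMonoidHom.comp_apply, AddMonoidHom.comp_apply,
      sigHom_single, theta_one_single, one_smul, map_sub]
    have h0 : sig a 0 = 0 := sig_zero a
    have h1 : sig a (1 : Fin 2) = Multiplicative.toAdd (a 0) := by
      have e : (1 : Fin 2) = (0 : Fin 1).succ := rfl
      rw [e, sig_step]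
      have e2 : sig a ((0 : Fin 1).castSucc) = 0 := by
        have e3 : ((0 : Fin 1).castSucc) = (0 : Fin 2) := rfl
        rw [e3]
        exact sig_zero a
      rw [e2, zero_add]
    rw [h1, h0, Phi_zero, map_zero, sub_zero, piB_Phi, w_single,
      zmultiplesHom_apply, one_mul]
  exact DFunLike.congr_fun key c

lemma qMap_one (n : ℕ) (x : IGC.C M ℤ n) : IGC.qMap M ℤ ℤˣ 1 n x = x := by
  have key : IGC.qMap M ℤ ℤˣ 1 n = AddMonoidHom.id _ := by
    apply extC_hom; intro a
    rw [IGC.qMap, IGC.chainMapOf_single, AddMonoidHom.id_apply]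
    congr 1
    funext j
    show (1 : ℤˣ) • (a j) = a j
    rw [one_smul]
  rw [key]; rfl

lemma qMap_neg_neg (n : ℕ) (x : IGC.C M ℤ n) :
    IGC.qMap M ℤ ℤˣ (-1) n (IGC.qMap M ℤ ℤˣ (-1) n x) = x := by
  have key : (IGC.qMap M ℤ ℤˣ (-1) n).comp (IGC.qMap M ℤ ℤˣ (-1) n) = AddMonoidHom.id _ := by
    apply extC_hom; intro a
    rw [AddMonoidHom.comp_apply, IGC.qMap, IGC.chainMapOf_single, IGC.chainMapOf_single,
      AddMonoidHom.id_apply]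
    congr 1
    funext j
    show (-1 : ℤˣ) • ((-1 : ℤˣ) • (a j)) = a j
    rw [smul_smul]
    norm_num
  have := DFunLike.congr_fun key x
  rw [AddMonoidHom.comp_apply] at this
  rw [this]; rfl

lemma w_qMap_neg (c : IGC.C M ℤ 1) : w (IGC.qMap M ℤ ℤˣ (-1) 1 c) = - w c := by
  have key : w.comp (IGC.qMap M ℤ ℤˣ (-1) 1) = (-w : IGC.C M ℤ 1 →+ ℤ) := by
    apply extC_hom; intro a
    rw [AddMonoidHom.comp_apply, IGC.qMap, IGC.chainMapOf_single, w_single,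
      AddMonoidHom.neg_apply, w_single]
    have key2 : Multiplicative.toAdd ((MulDistribMulAction.toMonoidHom M (-1 : ℤˣ)) (a 0))
        = - Multiplicative.toAdd (a 0) := by
      show Multiplicative.toAdd ((a 0) ^ ((-1 : ℤˣ) : ℤ)) = _
      rw [toAdd_zpow]
      norm_num
    rw [key2]
    ring
  have := DFunLike.congr_fun key c
  rw [AddMonoidHom.comp_apply] at this
  rw [this, AddMonoidHom.neg_apply]

/-- Every invariant cycle of positive degree in the bar complex of `ℤ` bounds. -/
lemma inv_cycle_bound (n : ℕ) (c : IGC.C M ℤ (n + 1))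
    (hinv : IGC.qMap M ℤ ℤˣ (-1) (n + 1) c = c)
    (hcyc : IGC.barD M ℤ n c = 0) :
    ∃ b : IGC.C M ℤ (n + 2), IGC.barD M ℤ (n + 1) b = c := by
  have hid := hC_ident n c
  rw [hcyc, map_zero, add_zero] at hid
  have hz : piB (n + 1) (theta (n + 1) (sigHom (n + 1) c)) = 0 := by
    cases n with
    | zero =>
      rw [theta_sig_one]
      have hw : w c = 0 := by
        have h1 : w (IGC.qMap M ℤ ℤˣ (-1) 1 c) = - w c := w_qMap_neg c
        rw [hinv] at h1
        omega
      rw [hw, zero_smul]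
    | succ m =>
      rw [theta_two_plus, map_zero]
  rw [hz, zero_sub] at hid
  exact ⟨-(hC (n + 1) c), by rw [map_neg, hid, neg_neg]⟩


end
end UP

/-- for `i ≥ 1`, `H_i^{ℤ/2}(ℤ;ℤ)` is 2-torsion, where `ℤ/2 = ℤˣ` acts on `ℤ`
(written multiplicatively) by negation. -/
theorem stmt4 (i : ℕ) (hi : 1 ≤ i) (x : IGC.invHomology (Multiplicative ℤ) ℤ ℤˣ i) :
    2 • x = 0 := by
  obtain ⟨n, rfl⟩ : ∃ n, i = n + 1 := ⟨i - 1, by omega⟩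
  induction x using QuotientAddGroup.induction_on with
  | H c =>
    have hc : (c : IGC.C (Multiplicative ℤ) ℤ (n + 1)) ∈
        IGC.invC (Multiplicative ℤ) ℤ ℤˣ (n + 1) ⊓ IGC.cycles (Multiplicative ℤ) ℤ (n + 1) :=
      c.2
    rw [AddSubgroup.mem_inf] at hc
    obtain ⟨hc1, hc2⟩ := hc
    have hc1' : (c : IGC.C (Multiplicative ℤ) ℤ (n + 1)) ∈
        ⨅ q : ℤˣ, (IGC.qMap (Multiplicative ℤ) ℤ ℤˣ q (n + 1)
          - AddMonoidHom.id (IGC.C (Multiplicative ℤ) ℤ (n + 1))).ker := hc1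
    rw [AddSubgroup.mem_iInf] at hc1'
    have hinv : ∀ q : ℤˣ, IGC.qMap (Multiplicative ℤ) ℤ ℤˣ q (n + 1)
        (c : IGC.C (Multiplicative ℤ) ℤ (n + 1)) = c := by
      intro q
      have h := hc1' q
      rw [AddMonoidHom.mem_ker, AddMonoidHom.sub_apply, sub_eq_zero, AddMonoidHom.id_apply] at h
      exact h
    have hcyc : IGC.barD (Multiplicative ℤ) ℤ n (c : IGC.C (Multiplicative ℤ) ℤ (n + 1)) = 0 := by
      have h : (c : IGC.C (Multiplicative ℤ) ℤ (n + 1)) ∈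
          (IGC.barD (Multiplicative ℤ) ℤ n).ker := hc2
      rw [AddMonoidHom.mem_ker] at h
      exact h
    obtain ⟨b, hb⟩ := UP.inv_cycle_bound n c (hinv (-1)) hcyc
    set b' : IGC.C (Multiplicative ℤ) ℤ (n + 2)
      := b + IGC.qMap (Multiplicative ℤ) ℤ ℤˣ (-1) (n + 2) b with hb'def
    have hcomm := DFunLike.congr_fun (IGC.chainMapOf_barD (Multiplicative ℤ) ℤ
      (MulDistribMulAction.toMonoidHom (Multiplicative ℤ) (-1 : ℤˣ)) (n + 1)) b
    rw [AddMonoidHom.comp_apply, AddMonoidHom.comp_apply] at hcomm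
    have hb' : IGC.barD (Multiplicative ℤ) ℤ (n + 1) b'
        = (c : IGC.C (Multiplicative ℤ) ℤ (n + 1)) + c := by
      rw [hb'def, map_add, hb]
      congr 1
      calc IGC.barD (Multiplicative ℤ) ℤ (n + 1)
            (IGC.qMap (Multiplicative ℤ) ℤ ℤˣ (-1) (n + 2) b)
          = IGC.qMap (Multiplicative ℤ) ℤ ℤˣ (-1) (n + 1)
              (IGC.barD (Multiplicative ℤ) ℤ (n + 1) b) := hcomm
        _ = c := by rw [hb]; exact hinv (-1)
    have hb'mem : b' ∈ IGC.invC (Multiplicative ℤ) ℤ ℤˣ (n + 2) := by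
      show b' ∈ ⨅ q : ℤˣ, (IGC.qMap (Multiplicative ℤ) ℤ ℤˣ q (n + 2)
        - AddMonoidHom.id (IGC.C (Multiplicative ℤ) ℤ (n + 2))).ker
      rw [AddSubgroup.mem_iInf]
      intro q
      rw [AddMonoidHom.mem_ker, AddMonoidHom.sub_apply, sub_eq_zero, AddMonoidHom.id_apply]
      rcases Int.units_eq_one_or q with rfl | rfl
      · exact UP.qMap_one _ _
      · rw [hb'def, map_add, UP.qMap_neg_neg]
        exact add_comm _ _
    have e : (2 • (QuotientAddGroup.mk c : IGC.invHomology (Multiplicative ℤ) ℤ ℤˣ (n + 1)))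
        = QuotientAddGroup.mk (2 • c) := by
      rw [two_nsmul, two_nsmul]
      rfl
    rw [e, QuotientAddGroup.eq_zero_iff, AddSubgroup.mem_addSubgroupOf]
    show ((2 • c : IGC.invCycles (Multiplicative ℤ) ℤ ℤˣ (n + 1))
        : IGC.C (Multiplicative ℤ) ℤ (n + 1)) ∈
      (IGC.invC (Multiplicative ℤ) ℤ ℤˣ (n + 2)).map (IGC.barD (Multiplicative ℤ) ℤ (n + 1))
    rw [AddSubgroup.mem_map]
    refine ⟨b', hb'mem, ?_⟩
    have ecoe : ((2 • c : IGC.invCycles (Multiplicative ℤ) ℤ ℤˣ (n + 1))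
        : IGC.C (Multiplicative ℤ) ℤ (n + 1)) = (c : IGC.C (Multiplicative ℤ) ℤ (n + 1)) + c := by
      rw [two_nsmul]
      rfl
    rw [ecoe, ← hb']
end

section
/- If Q = Z/p acts on G by automorphisms with trivial fixed subgroup G^Q = {e}, then the norm map induces an isomorphism H_*(BG/Q;Z) ≅ H_*^Q(G;Z). -/
namespace SAux

open IGC Finsupp

noncomputable section
set_option linter.unusedSectionVars false

variable (G : Type*) [Group G] (A : Type*) [AddCommGroup A]
variable (Q : Type*) [Group Q] [Fintype Q] [MulDistribMulAction Q G]

/-- The basepoint tuple. -/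
def eTup (n : ℕ) : Fin n → G := fun _ => 1

lemma qMap_single (q : Q) (n : ℕ) (g : Fin n → G) (a : A) :
    qMap G A Q q n (Finsupp.single g a) = Finsupp.single (q • g) a := by
  rw [qMap, chainMapOf_single]
  rfl

lemma qMap_comp (q r : Q) (n : ℕ) :
    (qMap G A Q q n).comp (qMap G A Q r n) = qMap G A Q (q * r) n := by
  rw [qMap, qMap, qMap, chainMapOf_comp]
  congr 1
  ext x
  exact (mul_smul q r x).symm

lemma qMap_eval (q : Q) (n : ℕ) (c : C G A n) (x : Fin n → G) :
    qMap G A Q q n c x = c (q⁻¹ • x) := by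
  conv_lhs => rw [show x = q • (q⁻¹ • x) from (smul_inv_smul q x).symm]
  exact Finsupp.mapDomain_apply (MulAction.injective q) c _

/-- The full norm operator `T = ∑ q • ·` on chains. -/
def normT (n : ℕ) : C G A n →+ C G A n := ∑ q : Q, qMap G A Q q n

lemma normT_apply (n : ℕ) (c : C G A n) :
    normT G A Q n c = ∑ q : Q, qMap G A Q q n c := by
  rw [normT]; exact AddMonoidHom.finset_sum_apply _ _ _

lemma normT_comp_qMap (r : Q) (n : ℕ) :
    (normT G A Q n).comp (qMap G A Q r n) = normT G A Q n := by
  refine AddMonoidHom.ext fun c => ?_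
  rw [AddMonoidHom.comp_apply, normT_apply, normT_apply]
  rw [show (∑ q : Q, qMap G A Q q n (qMap G A Q r n c))
      = ∑ q : Q, qMap G A Q (q * r) n c from
    Finset.sum_congr rfl fun q _ => by rw [← qMap_comp]; rfl]
  exact Fintype.sum_equiv (Equiv.mulRight r) _ _ fun q => rfl

lemma qMap_comp_normT (r : Q) (n : ℕ) :
    (qMap G A Q r n).comp (normT G A Q n) = normT G A Q n := by
  refine AddMonoidHom.ext fun c => ?_
  rw [AddMonoidHom.comp_apply, normT_apply, map_sum]
  rw [show (∑ q : Q, qMap G A Q r n (qMap G A Q q n c))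
      = ∑ q : Q, qMap G A Q (r * q) n c from
    Finset.sum_congr rfl fun q _ => by rw [← qMap_comp]; rfl]
  exact Fintype.sum_equiv (Equiv.mulLeft r) _ _ fun q => rfl

lemma mem_invC_iff (n : ℕ) (c : C G A n) :
    c ∈ invC G A Q n ↔ ∀ q : Q, qMap G A Q q n c = c := by
  rw [invC, AddSubgroup.mem_iInf]
  refine forall_congr' fun q => ?_
  rw [AddMonoidHom.mem_ker, AddMonoidHom.sub_apply, AddMonoidHom.id_apply, sub_eq_zero]

lemma normT_mem_invC (n : ℕ) (c : C G A n) : normT G A Q n c ∈ invC G A Q n := by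
  rw [mem_invC_iff]
  intro q
  rw [← AddMonoidHom.comp_apply, qMap_comp_normT]

lemma sub_mem_W (q : Q) (n : ℕ) (c : C G A n) :
    qMap G A Q q n c - c ∈ W G A Q n := by
  refine AddSubgroup.mem_iSup_of_mem q ⟨c, ?_⟩
  rw [AddMonoidHom.sub_apply, AddMonoidHom.id_apply]

lemma barD_qMap (q : Q) (n : ℕ) (c : C G A (n + 1)) :
    barD G A n (qMap G A Q q (n + 1) c) = qMap G A Q q n (barD G A n c) := by
  rw [qMap, qMap, ← AddMonoidHom.comp_apply, ← AddMonoidHom.comp_apply, chainMapOf_barD]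

lemma barD_normT (n : ℕ) (c : C G A (n + 1)) :
    barD G A n (normT G A Q (n + 1) c) = normT G A Q n (barD G A n c) := by
  rw [normT_apply, map_sum, normT_apply]
  exact Finset.sum_congr rfl fun q _ => barD_qMap G A Q q n c

lemma barD_mem_W (n : ℕ) (c : C G A (n + 1)) (hc : c ∈ W G A Q (n + 1)) :
    barD G A n c ∈ W G A Q n := by
  have : W G A Q (n + 1) ≤ (W G A Q n).comap (barD G A n) := by
    refine iSup_le fun q => ?_
    rintro _ ⟨x, rfl⟩
    rw [AddSubgroup.mem_comap, AddMonoidHom.sub_apply, AddMonoidHom.id_apply, map_sub,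
      barD_qMap]
    exact sub_mem_W G A Q q n _
  exact this hc

lemma smul_eTup (q : Q) (n : ℕ) : q • eTup G n = eTup G n :=
  funext fun _ => smul_one q

lemma smul_eq_eTup_iff (q : Q) (n : ℕ) (g : Fin n → G) :
    q • g = eTup G n ↔ g = eTup G n := by
  constructor
  · intro h
    have := congrArg (fun y => q⁻¹ • y) h
    simpa [smul_eTup] using this
  · rintro rfl
    exact smul_eTup G Q q n

lemma single_eTup_mem_invC (n : ℕ) (a : A) :
    Finsupp.single (eTup G n) a ∈ invC G A Q n := by
  rw [mem_invC_iff]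
  intro q
  rw [qMap_single, smul_eTup]

/-- The coefficient of the basepoint tuple. -/
def epsC (n : ℕ) : C G A n →+ A := Finsupp.applyAddHom (eTup G n)

lemma epsC_single_same (n : ℕ) (a : A) :
    epsC G A n (Finsupp.single (eTup G n) a) = a :=
  Finsupp.single_eq_same

lemma epsC_single_ne (n : ℕ) {g : Fin n → G} (h : g ≠ eTup G n) (a : A) :
    epsC G A n (Finsupp.single g a) = 0 :=
  Finsupp.single_eq_of_ne' h

lemma epsC_qMap (q : Q) (n : ℕ) (c : C G A n) :
    epsC G A n (qMap G A Q q n c) = epsC G A n c := by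
  have h : (epsC G A n).comp (qMap G A Q q n) = epsC G A n := by
    refine Finsupp.addHom_ext fun g a => ?_
    rw [AddMonoidHom.comp_apply, qMap_single]
    by_cases hg : g = eTup G n
    · subst hg
      rw [smul_eTup]
    · rw [epsC_single_ne G A n hg, epsC_single_ne G A n (fun hq => hg ((smul_eq_eTup_iff G Q q n g).mp hq))]
  exact DFunLike.congr_fun h c

lemma epsC_normT (n : ℕ) (c : C G A n) :
    epsC G A n (normT G A Q n c) = (Fintype.card Q) • epsC G A n c := by
  rw [normT_apply, map_sum]
  rw [Finset.sum_congr rfl fun q _ => epsC_qMap G A Q q n c]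
  rw [Finset.sum_const, Finset.card_univ]

lemma epsC_eq_zero_of_mem_W (n : ℕ) (c : C G A n) (hc : c ∈ W G A Q n) :
    epsC G A n c = 0 := by
  have hW : W G A Q n ≤ (epsC G A n).ker := by
    refine iSup_le fun q => ?_
    rintro _ ⟨x, rfl⟩
    rw [AddMonoidHom.mem_ker, AddMonoidHom.sub_apply, AddMonoidHom.id_apply, map_sub,
      epsC_qMap, sub_self]
  exact hW hc

lemma neg_one_sum (m : ℕ) : ∑ i ∈ Finset.range m, (-1 : ℤ) ^ i = if Even m then 0 else 1 := by
  induction m with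
  | zero => simp
  | succ m ih =>
      rw [Finset.sum_range_succ, ih]
      rcases Nat.even_or_odd m with h | h
      · rw [if_pos h, if_neg (by simp [Nat.even_add_one, h]), Even.neg_one_pow h]
        ring
      · have h' := Nat.not_even_iff_odd.mpr h
        rw [if_neg h', if_pos (by simp [Nat.even_add_one, h']), Odd.neg_one_pow h]
        ring

lemma barFace_eTup (n : ℕ) (i : Fin (n + 2)) : barFace i (eTup G (n + 1)) = eTup G n := by
  funext j
  unfold barFace eTup
  split_ifs <;> simp

lemma barD_single_eTup (n : ℕ) (a : A) :
    barD G A n (Finsupp.single (eTup G (n + 1)) a)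
      = if Even n then 0 else Finsupp.single (eTup G n) a := by
  rw [barD_single]
  rw [Finset.sum_congr rfl fun (i : Fin (n + 2)) _ => by rw [barFace_eTup]]
  rw [← Finsupp.single_finset_sum, ← Finset.sum_smul, Fin.sum_univ_eq_sum_range, neg_one_sum]
  have hpar : Even (n + 2) ↔ Even n := by simp [Nat.even_add_one, parity_simps]
  by_cases h : Even n
  · rw [if_pos (hpar.mpr h), if_pos h, zero_smul, Finsupp.single_zero]
  · rw [if_neg (fun hc => h (hpar.mp hc)), if_neg h, one_smul]

lemma normT_eq_zero_of_mem_W (n : ℕ) (c : C G A n) (hc : c ∈ W G A Q n) :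
    normT G A Q n c = 0 := by
  have hW : W G A Q n ≤ (normT G A Q n).ker := by
    refine iSup_le fun q => ?_
    rintro _ ⟨x, rfl⟩
    rw [AddMonoidHom.mem_ker, AddMonoidHom.sub_apply, AddMonoidHom.id_apply, map_sub,
      ← AddMonoidHom.comp_apply, normT_comp_qMap, sub_self]
  exact hW hc

section Orbit

variable {G Q}

lemma orderOf_eq_p {p : ℕ} (hp : p.Prime) (hQ : Fintype.card Q = p) {n : ℕ}
    {x : Fin n → G} {q₀ : Q} (hq : q₀ • x ≠ x) : orderOf q₀ = p := by
  have hd : orderOf q₀ ∣ p := hQ ▸ orderOf_dvd_card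
  rcases hp.eq_one_or_self_of_dvd _ hd with h | h
  · exfalso
    apply hq
    rw [orderOf_eq_one_iff.mp h, one_smul]
  · exact h

lemma orbit_inj {p : ℕ} (hp : p.Prime) (hQ : Fintype.card Q = p) {n : ℕ}
    {x : Fin n → G} {q₀ : Q} (hq : q₀ • x ≠ x) :
    ∀ {k l : ℕ}, k < p → l < p → q₀ ^ k • x = q₀ ^ l • x → k = l := by
  suffices H : ∀ k l : ℕ, k ≤ l → l < p → q₀ ^ k • x = q₀ ^ l • x → k = l by
    intro k l hk hl he
    rcases le_total k l with h | h
    · exact H k l h hl he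
    · exact (H l k h hk he.symm).symm
  intro k l hkl hl he
  by_contra hne
  have hd0 : 0 < l - k := by omega
  have hst : q₀ ^ (l - k) ∈ MulAction.stabilizer Q x := by
    have hl' : q₀ ^ l = q₀ ^ k * q₀ ^ (l - k) := by
      rw [← pow_add]
      congr 1
      omega
    rw [hl', mul_smul] at he
    rw [MulAction.mem_stabilizer_iff]
    exact (MulAction.injective (q₀ ^ k) he).symm
  have horder : orderOf q₀ = p := orderOf_eq_p hp hQ hq
  have h1 : orderOf (q₀ ^ (l - k)) = p := by
    rw [orderOf_pow, horder]
    have hnd : ¬ p ∣ (l - k) := by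
      intro hdvd
      have := Nat.le_of_dvd hd0 hdvd
      omega
    rw [(hp.coprime_iff_not_dvd.mpr hnd).gcd_eq_one, Nat.div_one]
  have htop : Subgroup.zpowers (q₀ ^ (l - k)) = ⊤ := by
    apply Subgroup.eq_top_of_card_eq
    rw [Nat.card_zpowers, h1, Nat.card_eq_fintype_card, hQ]
  have hle : Subgroup.zpowers (q₀ ^ (l - k)) ≤ MulAction.stabilizer Q x :=
    Subgroup.zpowers_le.mpr hst
  apply hq
  exact hle (htop ▸ Subgroup.mem_top q₀)

lemma sum_Q_eq {p : ℕ} (hp : p.Prime) (hQ : Fintype.card Q = p) {n : ℕ}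
    {x : Fin n → G} {q₀ : Q} (hq : q₀ • x ≠ x) {M : Type*} [AddCommMonoid M] (f : Q → M) :
    ∑ q : Q, f q = ∑ k ∈ Finset.range p, f (q₀ ^ k) := by
  have horder := orderOf_eq_p hp hQ hq
  have hbij : Function.Bijective (fun k : Fin p => q₀ ^ (k : ℕ)) := by
    rw [Fintype.bijective_iff_injective_and_card]
    refine ⟨fun k l h => ?_, by simp [hQ]⟩
    exact Fin.ext (pow_injOn_Iio_orderOf (by simp [horder, k.isLt])
      (by simp [horder, l.isLt]) h)
  rw [Finset.sum_range fun k => f (q₀ ^ k)]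
  exact (Fintype.sum_bijective _ hbij _ _ fun k => rfl).symm

end Orbit

lemma ker_normT {p : ℕ} (hp : p.Prime) (hQ : Fintype.card Q = p) (n : ℕ) :
    ∀ c : C G ℤ n, normT G ℤ Q n c = 0 → c ∈ W G ℤ Q n := by
  classical
  suffices H : ∀ (k : ℕ) (c : C G ℤ n), c.support.card ≤ k →
      normT G ℤ Q n c = 0 → c ∈ W G ℤ Q n from fun c hc => H _ c le_rfl hc
  intro k
  induction k with
  | zero =>
      intro c hcard _
      rw [Nat.le_zero, Finset.card_eq_zero, Finsupp.support_eq_empty] at hcard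
      rw [hcard]
      exact zero_mem _
  | succ k ih =>
      intro c hcard hc
      rcases eq_or_ne c 0 with rfl | h0
      · exact zero_mem _
      obtain ⟨x, hx⟩ := Finsupp.support_nonempty_iff.mpr h0
      have hTx : ∀ y, (∑ q : Q, c (q⁻¹ • y)) = 0 := by
        intro y
        have h1 := DFunLike.congr_fun hc y
        rw [normT_apply, Finsupp.finset_sum_apply] at h1
        rw [← Finset.sum_congr rfl fun (q : Q) _ => (qMap_eval G ℤ Q q n c y)]
        exact h1
      by_cases hfree : ∀ q : Q, q • x = x
      · exfalso
        have h1 := hTx x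
        have h2 : ∀ q : Q, c (q⁻¹ • x) = c x := fun q => by rw [hfree q⁻¹]
        rw [Finset.sum_congr rfl fun q _ => h2 q, Finset.sum_const, Finset.card_univ, hQ,
          nsmul_eq_mul] at h1
        have hp0 : (p : ℤ) ≠ 0 := Int.natCast_ne_zero.mpr hp.ne_zero
        exact Finsupp.mem_support_iff.mp hx ((mul_eq_zero.mp h1).resolve_left hp0)
      · push_neg at hfree
        obtain ⟨q₀, hq₀⟩ := hfree
        have hinj := fun {k l : ℕ} => orbit_inj hp hQ hq₀ (k := k) (l := l)
        set a : ℕ → ℤ := fun m => c (q₀ ^ m • x) with ha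
        have hsum0 : ∑ m ∈ Finset.range p, a m = 0 := by
          have h1 := hTx x
          rw [Fintype.sum_equiv (Equiv.inv Q) _ (fun q => c (q • x)) (fun q => by simp)] at h1
          rwa [sum_Q_eq hp hQ hq₀] at h1
        set hchain : C G ℤ n :=
          ∑ m ∈ Finset.range p, a m • (∑ j ∈ Finset.range m, Finsupp.single (q₀ ^ j • x) (1 : ℤ))
          with hh
        set o : C G ℤ n := ∑ m ∈ Finset.range p, Finsupp.single (q₀ ^ m • x) (a m) with ho
        have hkey : qMap G ℤ Q q₀ n hchain - hchain = o := by
          rw [hh, map_sum, ← Finset.sum_sub_distrib]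
          have hterm : ∀ m ∈ Finset.range p,
              qMap G ℤ Q q₀ n (a m • (∑ j ∈ Finset.range m, Finsupp.single (q₀ ^ j • x) (1 : ℤ)))
                - a m • (∑ j ∈ Finset.range m, Finsupp.single (q₀ ^ j • x) (1 : ℤ))
              = Finsupp.single (q₀ ^ m • x) (a m) - Finsupp.single x (a m) := by
            intro m _
            rw [map_zsmul, ← smul_sub, map_sum, ← Finset.sum_sub_distrib]
            have hface : ∀ j ∈ Finset.range m,
                qMap G ℤ Q q₀ n (Finsupp.single (q₀ ^ j • x) (1 : ℤ))
                  - Finsupp.single (q₀ ^ j • x) (1 : ℤ)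
                = Finsupp.single (q₀ ^ (j + 1) • x) (1 : ℤ)
                  - Finsupp.single (q₀ ^ j • x) (1 : ℤ) := by
              intro j _
              rw [qMap_single, smul_smul, ← pow_succ']
            rw [Finset.sum_congr rfl hface,
              Finset.sum_range_sub (fun j => Finsupp.single (q₀ ^ j • x) (1 : ℤ))]
            rw [pow_zero, one_smul, smul_sub, Finsupp.smul_single, Finsupp.smul_single,
              smul_eq_mul, mul_one]
          rw [Finset.sum_congr rfl hterm, Finset.sum_sub_distrib, ← Finsupp.single_finset_sum,
            hsum0, Finsupp.single_zero, sub_zero, ho]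
        have ho_mem : o ∈ W G ℤ Q n := hkey ▸ sub_mem_W G ℤ Q q₀ n hchain
        have o_orbit : ∀ m, m < p → o (q₀ ^ m • x) = a m := by
          intro m hm
          rw [ho, Finsupp.finset_sum_apply]
          rw [Finset.sum_eq_single m
            (fun b hb hbm => Finsupp.single_eq_of_ne'
              (fun he => hbm (hinj (Finset.mem_range.mp hb) hm he)))
            (fun hm' => absurd (Finset.mem_range.mpr hm) hm')]
          exact Finsupp.single_eq_same
        have o_off : ∀ y, (∀ m, m < p → y ≠ q₀ ^ m • x) → o y = 0 := by
          intro y hy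
          rw [ho, Finsupp.finset_sum_apply]
          exact Finset.sum_eq_zero fun m hm =>
            Finsupp.single_eq_of_ne' fun he => hy m (Finset.mem_range.mp hm) he.symm
        have hsupp : (c - o).support ⊆ c.support.erase x := by
          intro y hy
          rw [Finset.mem_erase]
          rw [Finsupp.mem_support_iff, Finsupp.sub_apply] at hy
          by_cases horb : ∃ m, m < p ∧ y = q₀ ^ m • x
          · obtain ⟨m, hm, rfl⟩ := horb
            exact absurd (by rw [o_orbit m hm, ha, sub_self]) hy
          · push_neg at horb
            rw [o_off y horb, sub_zero] at hy
            refine ⟨fun hxy => ?_, Finsupp.mem_support_iff.mpr hy⟩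
            exact horb 0 hp.pos (by rw [hxy, pow_zero, one_smul])
        have hcard' : (c - o).support.card ≤ k := by
          have h1 := Finset.card_le_card hsupp
          rw [Finset.card_erase_of_mem hx] at h1
          omega
        have hnorm' : normT G ℤ Q n (c - o) = 0 := by
          rw [map_sub, hc, ← hkey, map_sub, ← AddMonoidHom.comp_apply, normT_comp_qMap,
            sub_self, zero_sub, neg_zero]
        have := ih (c - o) hcard' hnorm'
        rw [← sub_add_cancel c o]
        exact add_mem this ho_mem

lemma invC_decomp {p : ℕ} (hp : p.Prime) (hQ : Fintype.card Q = p)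
    (hfix : fixedSubgroup G Q = ⊥) (n : ℕ) :
    ∀ z ∈ invC G ℤ Q n, ∃ (c : C G ℤ n) (r : ℤ),
      z = normT G ℤ Q n c + Finsupp.single (eTup G n) r := by
  classical
  suffices H : ∀ (k : ℕ) (z : C G ℤ n), z.support.card ≤ k → z ∈ invC G ℤ Q n →
      ∃ c r, z = normT G ℤ Q n c + Finsupp.single (eTup G n) r from
    fun z hz => H _ z le_rfl hz
  intro k
  induction k with
  | zero =>
      intro z hcard _
      rw [Nat.le_zero, Finset.card_eq_zero, Finsupp.support_eq_empty] at hcard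
      exact ⟨0, 0, by rw [hcard, map_zero, Finsupp.single_zero, add_zero]⟩
  | succ k ih =>
      intro z hcard hz
      rcases eq_or_ne z 0 with rfl | h0
      · exact ⟨0, 0, by rw [map_zero, Finsupp.single_zero, add_zero]⟩
      obtain ⟨x, hx⟩ := Finsupp.support_nonempty_iff.mpr h0
      have hzq : ∀ (q : Q) (y : Fin n → G), z (q⁻¹ • y) = z y := by
        intro q y
        conv_rhs => rw [← (mem_invC_iff G ℤ Q n z).mp hz q]
        rw [qMap_eval]
      by_cases hfree : ∀ q : Q, q • x = x
      · have hxe : x = eTup G n := by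
          funext j
          have hj : x j ∈ fixedSubgroup G Q := fun q => congrFun (hfree q) j
          rw [hfix, Subgroup.mem_bot] at hj
          exact hj
        subst hxe
        set z' := z - Finsupp.single (eTup G n) (z (eTup G n)) with hz'
        have hz'inv : z' ∈ invC G ℤ Q n := sub_mem hz (single_eTup_mem_invC G ℤ Q n _)
        have hsupp : z'.support ⊆ z.support.erase (eTup G n) := by
          intro y hy
          rw [Finset.mem_erase]
          rw [Finsupp.mem_support_iff, hz', Finsupp.sub_apply] at hy
          by_cases hye : y = eTup G n
          · rw [hye, Finsupp.single_eq_same, sub_self] at hy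
            exact absurd rfl hy
          · rw [Finsupp.single_eq_of_ne' (Ne.symm hye), sub_zero] at hy
            exact ⟨hye, Finsupp.mem_support_iff.mpr hy⟩
        have hcard' : z'.support.card ≤ k := by
          have h1 := Finset.card_le_card hsupp
          rw [Finset.card_erase_of_mem hx] at h1
          omega
        obtain ⟨c, r, hcr⟩ := ih z' hcard' hz'inv
        refine ⟨c, r + z (eTup G n), ?_⟩
        rw [Finsupp.single_add, ← add_assoc, ← hcr, hz', sub_add_cancel]
      · push_neg at hfree
        obtain ⟨q₀, hq₀⟩ := hfree
        have hinj := fun {k l : ℕ} => orbit_inj hp hQ hq₀ (k := k) (l := l)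
        set o := normT G ℤ Q n (Finsupp.single x (z x)) with ho
        have ho_apply : ∀ y, o y = ∑ m ∈ Finset.range p,
            Finsupp.single (q₀ ^ m • x) (z x) y := by
          intro y
          rw [ho, normT_apply, Finsupp.finset_sum_apply]
          have h1 : ∀ q : Q, (qMap G ℤ Q q n (Finsupp.single x (z x))) y
              = Finsupp.single (q • x) (z x) y := fun q => by rw [qMap_single]
          rw [Finset.sum_congr rfl fun q _ => h1 q]
          exact sum_Q_eq hp hQ hq₀ (fun q => Finsupp.single (q • x) (z x) y)
        have o_orbit : ∀ m, m < p → o (q₀ ^ m • x) = z x := by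
          intro m hm
          rw [ho_apply]
          rw [Finset.sum_eq_single m
            (fun b hb hbm => Finsupp.single_eq_of_ne'
              (fun he => hbm (hinj (Finset.mem_range.mp hb) hm he)))
            (fun hm' => absurd (Finset.mem_range.mpr hm) hm')]
          exact Finsupp.single_eq_same
        have o_off : ∀ y, (∀ m, m < p → y ≠ q₀ ^ m • x) → o y = 0 := by
          intro y hy
          rw [ho_apply]
          exact Finset.sum_eq_zero fun m hm =>
            Finsupp.single_eq_of_ne' fun he => hy m (Finset.mem_range.mp hm) he.symm
        have hz_orbit : ∀ m : ℕ, z (q₀ ^ m • x) = z x := by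
          intro m
          have h1 := hzq ((q₀ ^ m)⁻¹) x
          rwa [inv_inv] at h1
        set z' := z - o with hz'
        have hz'inv : z' ∈ invC G ℤ Q n := sub_mem hz (normT_mem_invC G ℤ Q n _)
        have hsupp : z'.support ⊆ z.support.erase x := by
          intro y hy
          rw [Finset.mem_erase]
          rw [Finsupp.mem_support_iff, hz', Finsupp.sub_apply] at hy
          by_cases horb : ∃ m, m < p ∧ y = q₀ ^ m • x
          · obtain ⟨m, hm, rfl⟩ := horb
            rw [o_orbit m hm, hz_orbit m, sub_self] at hy
            exact absurd rfl hy
          · push_neg at horb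
            rw [o_off y horb, sub_zero] at hy
            refine ⟨fun hxy => ?_, Finsupp.mem_support_iff.mpr hy⟩
            exact horb 0 hp.pos (by rw [hxy, pow_zero, one_smul])
        have hcard' : z'.support.card ≤ k := by
          have h1 := Finset.card_le_card hsupp
          rw [Finset.card_erase_of_mem hx] at h1
          omega
        obtain ⟨c, r, hcr⟩ := ih z' hcard' hz'inv
        refine ⟨c + Finsupp.single x (z x), r, ?_⟩
        rw [map_add, ← ho, add_comm (normT G ℤ Q n c) o, add_assoc, ← hcr, hz', add_comm,
          sub_add_cancel]

lemma normT_single_eTup (m : ℕ) (a : ℤ) :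
    normT G ℤ Q m (Finsupp.single (eTup G m) a)
      = Finsupp.single (eTup G m) ((Fintype.card Q : ℤ) * a) := by
  rw [normT_apply]
  have h1 : ∀ q : Q, qMap G ℤ Q q m (Finsupp.single (eTup G m) a)
      = Finsupp.single (eTup G m) a := fun q => by rw [qMap_single, smul_eTup]
  rw [Finset.sum_congr rfl fun q _ => h1 q, Finset.sum_const, Finset.card_univ,
    Finsupp.smul_single, nsmul_eq_mul]

lemma qMap_zero_eq_id (q : Q) : qMap G A Q q 0 = AddMonoidHom.id (C G A 0) := by
  refine Finsupp.addHom_ext fun g a => ?_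
  rw [qMap_single, AddMonoidHom.id_apply]
  congr 1
  funext j
  exact j.elim0

lemma W_zero_eq_bot : W G A Q 0 = ⊥ := by
  refine le_antisymm (iSup_le fun q => ?_) bot_le
  rintro _ ⟨x, rfl⟩
  rw [AddMonoidHom.sub_apply, AddMonoidHom.id_apply, qMap_zero_eq_id, AddMonoidHom.id_apply,
    sub_self]
  exact zero_mem _

lemma barD_zero_eq_zero : barD G A 0 = 0 := by
  refine Finsupp.addHom_ext fun g a => ?_
  have h01 : barFace (1 : Fin 2) g = barFace (0 : Fin 2) g := funext fun j => j.elim0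
  rw [barD_single, Fin.sum_univ_two, h01]
  simp [← Finsupp.single_add]

lemma quotCycles_zero_eq_top : quotCycles G A Q 0 = ⊤ := by
  refine eq_top_iff.mpr fun c _ => ?_
  rw [quotCycles, AddSubgroup.mem_comap]
  show (0 : C G A 0 →+ C G A 0) c ∈ W G A Q 0
  rw [AddMonoidHom.zero_apply]
  exact zero_mem _

lemma quotBoundaries_zero_eq_bot : quotBoundaries G A Q 0 = ⊥ := by
  rw [quotBoundaries, W_zero_eq_bot, bot_sup_eq]
  refine le_antisymm ?_ bot_le
  rintro _ ⟨u, rfl⟩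
  rw [barD_zero_eq_zero, AddMonoidHom.zero_apply]
  exact zero_mem _

lemma invCycles_zero_eq_top : invCycles G A Q 0 = ⊤ := by
  refine eq_top_iff.mpr fun c _ => ?_
  rw [invCycles, AddSubgroup.mem_inf]
  constructor
  · rw [mem_invC_iff]
    intro q
    rw [qMap_zero_eq_id, AddMonoidHom.id_apply]
  · rw [cycles, AddMonoidHom.mem_ker]
    rfl

lemma invBoundaries_zero_eq_bot : invBoundaries G A Q 0 = ⊥ := by
  rw [invBoundaries]
  refine le_antisymm ?_ bot_le
  rintro _ ⟨u, _, rfl⟩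
  rw [barD_zero_eq_zero, AddMonoidHom.zero_apply]
  exact zero_mem _

lemma main_zero : Nonempty (quotHomology G ℤ Q 0 ≃+ invHomology G ℤ Q 0) := by
  have hle : quotCycles G ℤ Q 0 ≤ invCycles G ℤ Q 0 := by
    rw [quotCycles_zero_eq_top, invCycles_zero_eq_top]
  let f : quotCycles G ℤ Q 0 →+ invCycles G ℤ Q 0 := AddSubgroup.inclusion hle
  have hdesc : (quotBoundaries G ℤ Q 0).addSubgroupOf (quotCycles G ℤ Q 0) ≤
      ((invBoundaries G ℤ Q 0).addSubgroupOf (invCycles G ℤ Q 0)).comap f := by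
    intro c hc
    rw [AddSubgroup.mem_addSubgroupOf] at hc
    rw [AddSubgroup.mem_comap, AddSubgroup.mem_addSubgroupOf, AddSubgroup.coe_inclusion]
    rw [quotBoundaries_zero_eq_bot, AddSubgroup.mem_bot] at hc
    rw [hc]
    exact zero_mem _
  let Φ := QuotientAddGroup.map _ _ f hdesc
  have hinj : Function.Injective Φ := by
    rw [injective_iff_map_eq_zero]
    intro zc hzc
    obtain ⟨c, rfl⟩ := QuotientAddGroup.mk_surjective zc
    rw [QuotientAddGroup.map_mk, QuotientAddGroup.eq_zero_iff,
      AddSubgroup.mem_addSubgroupOf, AddSubgroup.coe_inclusion,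
      invBoundaries_zero_eq_bot, AddSubgroup.mem_bot] at hzc
    rw [QuotientAddGroup.eq_zero_iff, AddSubgroup.mem_addSubgroupOf, hzc]
    exact zero_mem _
  have hsurj : Function.Surjective Φ := by
    intro zc
    obtain ⟨z, rfl⟩ := QuotientAddGroup.mk_surjective zc
    refine ⟨QuotientAddGroup.mk ⟨(z : C G ℤ 0), by rw [quotCycles_zero_eq_top]; trivial⟩, ?_⟩
    rw [QuotientAddGroup.map_mk]
    exact congrArg _ (Subtype.ext rfl)
  exact ⟨AddEquiv.ofBijective Φ ⟨hinj, hsurj⟩⟩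

lemma main_succ {p : ℕ} (hp : p.Prime) (hQ : Fintype.card Q = p)
    (hfix : fixedSubgroup G Q = ⊥) (n : ℕ) :
    Nonempty (quotHomology G ℤ Q (n + 1) ≃+ invHomology G ℤ Q (n + 1)) := by
  have hmemInv : ∀ c : quotCycles G ℤ Q (n + 1),
      normT G ℤ Q (n + 1) (c : C G ℤ (n + 1)) ∈ invCycles G ℤ Q (n + 1) := by
    intro c
    have hc2 : barD G ℤ n (c : C G ℤ (n + 1)) ∈ W G ℤ Q n := AddSubgroup.mem_comap.mp c.2
    rw [invCycles, AddSubgroup.mem_inf]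
    refine ⟨normT_mem_invC G ℤ Q (n + 1) _, ?_⟩
    rw [cycles, AddMonoidHom.mem_ker]
    show barD G ℤ n (normT G ℤ Q (n + 1) (c : C G ℤ (n + 1))) = 0
    rw [barD_normT]
    exact normT_eq_zero_of_mem_W G ℤ Q n _ hc2
  let f : quotCycles G ℤ Q (n + 1) →+ invCycles G ℤ Q (n + 1) :=
    ((normT G ℤ Q (n + 1)).comp (quotCycles G ℤ Q (n + 1)).subtype).codRestrict _ hmemInv
  have hfval : ∀ c : quotCycles G ℤ Q (n + 1),
      (f c : C G ℤ (n + 1)) = normT G ℤ Q (n + 1) (c : C G ℤ (n + 1)) := fun c => rfl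
  have hdesc : (quotBoundaries G ℤ Q (n + 1)).addSubgroupOf (quotCycles G ℤ Q (n + 1)) ≤
      ((invBoundaries G ℤ Q (n + 1)).addSubgroupOf (invCycles G ℤ Q (n + 1))).comap f := by
    intro c hc
    rw [AddSubgroup.mem_addSubgroupOf] at hc
    rw [AddSubgroup.mem_comap, AddSubgroup.mem_addSubgroupOf, hfval]
    have hsub : W G ℤ Q (n + 1) ⊔ (barD G ℤ (n + 1)).range ≤
        (invBoundaries G ℤ Q (n + 1)).comap (normT G ℤ Q (n + 1)) := by
      refine sup_le ?_ ?_
      · intro w hw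
        rw [AddSubgroup.mem_comap, normT_eq_zero_of_mem_W G ℤ Q (n + 1) w hw]
        exact zero_mem _
      · rintro _ ⟨u, rfl⟩
        rw [AddSubgroup.mem_comap, ← barD_normT]
        exact ⟨normT G ℤ Q (n + 2) u, normT_mem_invC G ℤ Q (n + 2) u, rfl⟩
    exact hsub hc
  let Φ := QuotientAddGroup.map _ _ f hdesc
  have hinj : Function.Injective Φ := by
    rw [injective_iff_map_eq_zero]
    intro zc hzc
    obtain ⟨c, rfl⟩ := QuotientAddGroup.mk_surjective zc
    rw [QuotientAddGroup.map_mk, QuotientAddGroup.eq_zero_iff,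
      AddSubgroup.mem_addSubgroupOf, hfval] at hzc
    obtain ⟨u, hu, hdu⟩ := hzc
    obtain ⟨v, r, hvr⟩ := invC_decomp G Q hp hQ hfix (n + 2) u hu
    have heq : normT G ℤ Q (n + 1) (c : C G ℤ (n + 1))
        = normT G ℤ Q (n + 1) (barD G ℤ (n + 1) v)
          + (if Even (n + 1) then 0 else Finsupp.single (eTup G (n + 1)) r) := by
      rw [← hdu, hvr, map_add, barD_normT, barD_single_eTup]
    rw [QuotientAddGroup.eq_zero_iff, AddSubgroup.mem_addSubgroupOf]
    show (c : C G ℤ (n + 1)) ∈ quotBoundaries G ℤ Q (n + 1)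
    rw [quotBoundaries]
    by_cases hn : Even (n + 1)
    · rw [if_pos hn, add_zero] at heq
      have h0 : normT G ℤ Q (n + 1) ((c : C G ℤ (n + 1)) - barD G ℤ (n + 1) v) = 0 := by
        rw [map_sub, heq, sub_self]
      have hW := ker_normT G Q hp hQ (n + 1) _ h0
      rw [← sub_add_cancel (c : C G ℤ (n + 1)) (barD G ℤ (n + 1) v)]
      exact add_mem (AddSubgroup.mem_sup_left hW) (AddSubgroup.mem_sup_right ⟨v, rfl⟩)
    · rw [if_neg hn] at heq
      set m' : ℤ := epsC G ℤ (n + 1) (c : C G ℤ (n + 1))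
        - epsC G ℤ (n + 1) (barD G ℤ (n + 1) v) with hm'
      have he := congrArg (epsC G ℤ (n + 1)) heq
      rw [map_add, epsC_normT, epsC_normT, epsC_single_same, hQ, nsmul_eq_mul,
        nsmul_eq_mul] at he
      have hr : r = (p : ℤ) * m' := by rw [hm']; linarith
      have hT0 : normT G ℤ Q (n + 1)
          ((c : C G ℤ (n + 1)) - barD G ℤ (n + 1) v
            - Finsupp.single (eTup G (n + 1)) m') = 0 := by
        rw [map_sub, map_sub, heq, normT_single_eTup, hQ, ← hr]
        abel
      have hW := ker_normT G Q hp hQ (n + 1) _ hT0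
      have hb : barD G ℤ (n + 1) (v + Finsupp.single (eTup G (n + 2)) m')
          = barD G ℤ (n + 1) v + Finsupp.single (eTup G (n + 1)) m' := by
        rw [map_add, barD_single_eTup, if_neg hn]
      rw [show (c : C G ℤ (n + 1))
          = ((c : C G ℤ (n + 1)) - barD G ℤ (n + 1) v - Finsupp.single (eTup G (n + 1)) m')
            + (barD G ℤ (n + 1) v + Finsupp.single (eTup G (n + 1)) m') from by abel]
      exact add_mem (AddSubgroup.mem_sup_left hW)
        (AddSubgroup.mem_sup_right ⟨v + Finsupp.single (eTup G (n + 2)) m', hb⟩)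
  have hsurj : Function.Surjective Φ := by
    intro zc
    obtain ⟨z, rfl⟩ := QuotientAddGroup.mk_surjective zc
    have hz1 : (z : C G ℤ (n + 1)) ∈ invC G ℤ Q (n + 1) :=
      (AddSubgroup.mem_inf.mp z.2).1
    have hz2 : barD G ℤ n (z : C G ℤ (n + 1)) = 0 :=
      AddMonoidHom.mem_ker.mp (AddSubgroup.mem_inf.mp z.2).2
    obtain ⟨c, r, hcr⟩ := invC_decomp G Q hp hQ hfix (n + 1) (z : C G ℤ (n + 1)) hz1
    have hdz : normT G ℤ Q n (barD G ℤ n c)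
        + (if Even n then 0 else Finsupp.single (eTup G n) r) = 0 := by
      rw [← barD_single_eTup, ← barD_normT, ← map_add, ← hcr, hz2]
    by_cases hn : Even n
    · rw [if_pos hn, add_zero] at hdz
      have hdc : c ∈ quotCycles G ℤ Q (n + 1) :=
        AddSubgroup.mem_comap.mpr (ker_normT G Q hp hQ n _ hdz)
      refine ⟨QuotientAddGroup.mk ⟨c, hdc⟩, ?_⟩
      rw [QuotientAddGroup.map_mk, QuotientAddGroup.eq]
      rw [AddSubgroup.mem_addSubgroupOf]
      have hval : -((f ⟨c, hdc⟩ : invCycles G ℤ Q (n + 1)) : C G ℤ (n + 1))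
          + (z : C G ℤ (n + 1)) = Finsupp.single (eTup G (n + 1)) r := by
        rw [hfval, hcr]
        abel
      rw [AddSubgroup.coe_add, AddSubgroup.coe_neg, hval]
      have hnn : ¬ Even (n + 1) := by simp [Nat.even_add_one, hn]
      exact ⟨Finsupp.single (eTup G (n + 2)) r, single_eTup_mem_invC G ℤ Q (n + 2) r,
        by rw [barD_single_eTup, if_neg hnn]⟩
    · rw [if_neg hn] at hdz
      have he := congrArg (epsC G ℤ n) hdz
      rw [map_add, epsC_normT, epsC_single_same, hQ, nsmul_eq_mul, map_zero] at he
      set m' : ℤ := -(epsC G ℤ n (barD G ℤ n c)) with hm'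
      have hr : r = (p : ℤ) * m' := by rw [hm']; linarith
      set c' : C G ℤ (n + 1) := c + Finsupp.single (eTup G (n + 1)) m' with hc'
      have hnc' : normT G ℤ Q (n + 1) c' = (z : C G ℤ (n + 1)) := by
        rw [hc', map_add, normT_single_eTup, hQ, ← hr, hcr]
      have hdc' : c' ∈ quotCycles G ℤ Q (n + 1) := by
        refine AddSubgroup.mem_comap.mpr (ker_normT G Q hp hQ n _ ?_)
        show normT G ℤ Q n (barD G ℤ n c') = 0
        rw [hc', map_add, barD_single_eTup, if_neg hn, map_add, normT_single_eTup, hQ, ← hr]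
        exact hdz
      refine ⟨QuotientAddGroup.mk ⟨c', hdc'⟩, ?_⟩
      rw [QuotientAddGroup.map_mk]
      exact congrArg _ (Subtype.ext hnc')
  exact ⟨AddEquiv.ofBijective Φ ⟨hinj, hsurj⟩⟩

end
end SAux

/-- if `Q = ℤ/p` acts on `G` with trivial fixed subgroup `G^Q = {e}`, then the
norm map induces an isomorphism `H_*(BG/Q;ℤ) ≅ H_*^Q(G;ℤ)`. -/
theorem stmt7 (G : Type*) [Group G] (Q : Type*) [Group Q] [Fintype Q]
    [MulDistribMulAction Q G] (p : ℕ) (hp : p.Prime) (hQ : Fintype.card Q = p)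
    (hfix : IGC.fixedSubgroup G Q = ⊥) (n : ℕ) :
    Nonempty (IGC.quotHomology G ℤ Q n ≃+ IGC.invHomology G ℤ Q n) := by
  cases n with
  | zero => exact SAux.main_zero G Q
  | succ n => exact SAux.main_succ G Q hp hQ hfix n
end
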